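/- arXiv:1809.09227 — 6 statements merged into one kernel-verified Lean document; each statement's English description precedes it below -/
import Mathlib

section
/- A degree sequence d₁ ≥ d₂ ≥ ... ≥ dₙ of non-negative integers is realizable by a loopless multigraph if and only if the sum d₁ + ... + dₙ is even and d₁ ≤ d₂ + ... + dₙ. -/
open Finset

/-- A loopless multigraph on `n` vertices, given by a symmetric edge-multiplicity
function with zero diagonal. -/
structure Multigraph (n : ℕ) where
  W : Fin n → Fin n → ℕ
  symm : ∀ u v, W u v = W v u
  loopless : ∀ v, W v v = 0

namespace Multigraph

variable {n : ℕ}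

/-- Number of edges (with multiplicity) with both endpoints in `S`. -/
def edgesIn (G : Multigraph n) (S : Finset (Fin n)) : ℕ :=
  ∑ u ∈ S, ∑ v ∈ S.filter (fun v => u < v), G.W u v

/-- Total number of edges (with multiplicity). -/
def edgeCount (G : Multigraph n) : ℕ := G.edgesIn Finset.univ

/-- Degree of a vertex: the number of edge-endpoints at `v`, with multiplicity. -/
def degree (G : Multigraph n) (v : Fin n) : ℕ := ∑ u, G.W v u

/-- A multigraph is almost regular if any two degrees differ by at most one. -/
def AlmostRegular (G : Multigraph n) : Prop :=
  ∀ u v, G.degree u ≤ G.degree v + 1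

/-- The underlying simple graph (adjacency = at least one edge). -/
def toSimple (G : Multigraph n) : SimpleGraph (Fin n) where
  Adj u v := u ≠ v ∧ 0 < G.W u v
  symm := by
    constructor
    intro u v h
    refine ⟨h.1.symm, ?_⟩
    rw [G.symm v u]
    exact h.2
  loopless := by
    constructor
    intro v h
    exact h.1 rfl

end Multigraph

/-- Number of edges of a simple graph with both endpoints in `S`. -/
noncomputable def SimpleGraph.edgesIn {V : Type*} (G : SimpleGraph V) (S : Finset V) : ℕ :=
  {e ∈ G.edgeSet | ∀ x ∈ e, x ∈ S}.ncard

private lemma multigraph_sum_deg_even {n : ℕ} (G : Multigraph n) :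
    Even (∑ i, G.degree i) := by
  classical
  have key : ∀ v u : Fin n,
      G.W v u = (if v < u then G.W v u else 0) + (if u < v then G.W v u else 0) := by
    intro v u
    rcases lt_trichotomy v u with h | h | h
    · simp [h, asymm h]
    · subst h; simp [G.loopless]
    · simp [h, asymm h]
  have hsum : ∑ i, G.degree i =
      (∑ v, ∑ u, if v < u then G.W v u else 0) +
      (∑ v, ∑ u, if u < v then G.W v u else 0) := by
    unfold Multigraph.degree
    rw [← Finset.sum_add_distrib]
    refine Finset.sum_congr rfl fun v _ => ?_
    rw [← Finset.sum_add_distrib]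
    exact Finset.sum_congr rfl fun u _ => key v u
  have hswap : (∑ v, ∑ u, if u < v then G.W v u else 0) =
      (∑ v, ∑ u, if v < u then G.W v u else 0) := by
    rw [Finset.sum_comm]
    refine Finset.sum_congr rfl fun v _ => Finset.sum_congr rfl fun u _ => ?_
    rw [G.symm]
  rw [hsum, hswap]
  exact ⟨_, rfl⟩

/-- adding one edge between `i` and `j` -/
private def addEdge {n : ℕ} (G : Multigraph n) (i j : Fin n) (hij : i ≠ j) :
    Multigraph n where
  W u v := G.W u v + (if (u = i ∧ v = j) ∨ (u = j ∧ v = i) then 1 else 0)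
  symm := by
    intro u v
    have h : ((u = i ∧ v = j) ∨ (u = j ∧ v = i)) ↔ ((v = i ∧ u = j) ∨ (v = j ∧ u = i)) := by
      tauto
    rw [G.symm, if_congr h rfl rfl]
  loopless := by
    intro v
    rw [G.loopless]
    split_ifs with h
    · rcases h with ⟨h1, h2⟩ | ⟨h1, h2⟩ <;> exact absurd (h1 ▸ h2 ▸ rfl : i = j) hij
    · rfl

private lemma addEdge_degree {n : ℕ} (G : Multigraph n) (i j : Fin n) (hij : i ≠ j)
    (v : Fin n) :
    (addEdge G i j hij).degree v =
      G.degree v + ((if v = i then 1 else 0) + (if v = j then 1 else 0)) := by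
  classical
  unfold Multigraph.degree addEdge
  dsimp only
  rw [Finset.sum_add_distrib]
  congr 1
  by_cases hvi : v = i
  · have hvj : v ≠ j := hvi ▸ hij
    have h1 : ∀ u : Fin n, (if (v = i ∧ u = j) ∨ (v = j ∧ u = i) then 1 else 0) =
        (if u = j then 1 else 0) := by
      intro u
      simp [hvi, hvj, hij, hij.symm]
    rw [Finset.sum_congr rfl fun u _ => h1 u]
    simp [hvi, hvj, hij, hij.symm]
  · by_cases hvj : v = j
    · have h1 : ∀ u : Fin n, (if (v = i ∧ u = j) ∨ (v = j ∧ u = i) then 1 else 0) =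
          (if u = i then 1 else 0) := by
        intro u
        simp [hvi, hvj, hij, hij.symm]
      rw [Finset.sum_congr rfl fun u _ => h1 u]
      simp [hvi, hvj, hij, hij.symm]
    · have h1 : ∀ u : Fin n, (if (v = i ∧ u = j) ∨ (v = j ∧ u = i) then 1 else 0) = 0 := by
        intro u
        simp [hvi, hvj, hij, hij.symm]
      rw [Finset.sum_congr rfl fun u _ => h1 u]
      simp [hvi, hvj, hij, hij.symm]

private lemma multigraph_realize (S : ℕ) : ∀ {n : ℕ} (d : Fin n → ℕ),
    ∑ i, d i = S → Even S → (∀ i, 2 * d i ≤ S) →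
    ∃ G : Multigraph n, ∀ i, G.degree i = d i := by
  classical
  induction S using Nat.strong_induction_on with
  | _ S ih =>
    intro n d hsum heven hmax
    rcases Nat.eq_zero_or_pos S with h0 | hpos
    · subst h0
      refine ⟨⟨fun _ _ => 0, fun _ _ => rfl, fun _ => rfl⟩, fun v => ?_⟩
      have : d v = 0 := by
        have := Finset.sum_eq_zero_iff.mp hsum v (Finset.mem_univ v)
        exact this
      simp [Multigraph.degree, this]
    · -- pick i with d i maximal
      have hn0 : 0 < n := by
        rcases Nat.eq_zero_or_pos n with h | h
        · subst h
          simp at hsum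
          omega
        · exact h
      have hne : (Finset.univ : Finset (Fin n)).Nonempty := ⟨⟨0, hn0⟩, Finset.mem_univ _⟩
      obtain ⟨i, -, hi⟩ := Finset.exists_max_image Finset.univ d hne
      have hdi : 0 < d i := by
        by_contra h
        push_neg at h
        have hz : ∀ k ∈ (Finset.univ : Finset (Fin n)), d k = 0 := fun k hk =>
          Nat.le_zero.mp ((hi k hk).trans (by omega))
        have : ∑ k, d k = 0 := Finset.sum_eq_zero hz
        omega
      have hne2 : (Finset.univ.erase i).Nonempty := by
        by_contra h
        rw [Finset.not_nonempty_iff_eq_empty] at h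
        have hsi : ∑ k, d k = d i := by
          rw [← Finset.add_sum_erase _ d (Finset.mem_univ i), h, Finset.sum_empty, add_zero]
        have := hmax i
        omega
      obtain ⟨j, hjmem, hj⟩ := Finset.exists_max_image _ d hne2
      have hij : i ≠ j := (Finset.ne_of_mem_erase hjmem).symm
      have hdj : 0 < d j := by
        by_contra h
        push_neg at h
        have hz : ∀ k ∈ Finset.univ.erase i, d k = 0 := fun k hk =>
          Nat.le_zero.mp ((hj k hk).trans (by omega))
        have hsi : ∑ k, d k = d i := by
          rw [← Finset.add_sum_erase _ d (Finset.mem_univ i), Finset.sum_eq_zero hz, add_zero]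
        have := hmax i
        omega
      set d' : Fin n → ℕ :=
        fun k => if k = i then d i - 1 else if k = j then d j - 1 else d k with hd'
      have hpt : ∀ k, d' k + ((if k = i then 1 else 0) + (if k = j then 1 else 0)) = d k := by
        intro k
        by_cases h1 : k = i
        · subst h1
          have : k ≠ j := hij
          simp [hd', this]
          omega
        · by_cases h2 : k = j
          · subst h2
            simp [hd', h1]
            omega
          · simp [hd', h1, h2]
      have hsum'2 : ∑ k, d' k + 2 = S := by
        have h1 : ∑ k, (d' k + ((if k = i then 1 else 0) + (if k = j then 1 else 0))) = S := by
          rw [Finset.sum_congr rfl fun k _ => hpt k]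
          exact hsum
        rw [Finset.sum_add_distrib, Finset.sum_add_distrib] at h1
        simp only [Finset.sum_ite_eq' Finset.univ, Finset.mem_univ, if_true] at h1
        omega
      obtain ⟨m, hm⟩ := heven
      have hS2 : S - 2 < S := by omega
      have heven' : Even (S - 2) := ⟨m - 1, by omega⟩
      have hmax' : ∀ k, 2 * d' k ≤ S - 2 := by
        intro k
        by_cases h1 : k = i
        · subst h1
          have := hmax k
          simp only [hd', if_true]
          omega
        · by_cases h2 : k = j
          · subst h2
            have := hmax k
            simp only [hd', h1, if_false, if_true]
            omega
          · have hk3 : d i + (d j + d k) ≤ S := by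
              rw [← hsum]
              have hmem1 : i ∉ ({j, k} : Finset (Fin n)) := by
                simp [hij, Ne.symm h1]
              have hmem2 : j ∉ ({k} : Finset (Fin n)) := by
                simp [Ne.symm h2]
              have h3 : ∑ x ∈ ({i, j, k} : Finset (Fin n)), d x = d i + (d j + d k) := by
                rw [Finset.sum_insert hmem1, Finset.sum_insert hmem2, Finset.sum_singleton]
              rw [← h3]
              exact Finset.sum_le_sum_of_subset (Finset.subset_univ _)
            have hki : d k ≤ d i := hi k (Finset.mem_univ k)
            have hkj : d k ≤ d j := hj k (Finset.mem_erase.mpr ⟨h1, Finset.mem_univ k⟩)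
            simp only [hd', h1, h2, if_false]
            omega
      obtain ⟨G', hG'⟩ := ih (S - 2) hS2 d' (by omega) heven' hmax'
      refine ⟨addEdge G' i j hij, fun v => ?_⟩
      rw [addEdge_degree, hG']
      have := hpt v
      omega

theorem multigraph_degree_sequence_realizable (n : ℕ) (hn : 0 < n) (d : Fin n → ℕ)
    (hd : Antitone d) :
    (∃ G : Multigraph n, ∀ i, G.degree i = d i) ↔
      Even (∑ i, d i) ∧ d ⟨0, hn⟩ ≤ ∑ i ∈ Finset.univ.erase ⟨0, hn⟩, d i := by
  classical
  constructor
  · rintro ⟨G, hG⟩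
    have hdeg : ∑ i, d i = ∑ i, G.degree i := by
      exact (Finset.sum_congr rfl fun i _ => (hG i).symm)
    constructor
    · rw [hdeg]
      exact multigraph_sum_deg_even G
    · have h1 : d ⟨0, hn⟩ = ∑ u ∈ Finset.univ.erase ⟨0, hn⟩, G.W ⟨0, hn⟩ u := by
        rw [← hG ⟨0, hn⟩]
        unfold Multigraph.degree
        rw [← Finset.add_sum_erase _ _ (Finset.mem_univ ⟨0, hn⟩), G.loopless, zero_add]
      rw [h1]
      refine Finset.sum_le_sum fun u hu => ?_
      rw [← hG u, G.symm]
      exact Finset.single_le_sum (f := fun v => G.W u v) (fun _ _ => Nat.zero_le _)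
        (Finset.mem_univ _)
  · rintro ⟨heven, hle⟩
    refine multigraph_realize (∑ i, d i) d rfl heven fun i => ?_
    have h0i : d i ≤ d ⟨0, hn⟩ := hd (Fin.mk_le_of_le_val (Nat.zero_le _))
    rw [← Finset.add_sum_erase _ d (Finset.mem_univ ⟨0, hn⟩)]
    omega
end

section
/- Let G be a loopless multigraph on n ≥ 5 vertices such that every induced subgraph on 3 vertices has at most 2 edges. Then G has at most ⌊n²/4⌋ edges. -/
open Finset

namespace Multigraph
variable {n : ℕ}
lemma double_count (G : Multigraph n) (S : Finset (Fin n)) :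
    ∑ a ∈ S, ∑ b ∈ S, G.W a b = 2 * G.edgesIn S := by
  have key : ∀ a ∈ S, ∑ b ∈ S, G.W a b =
      ∑ b ∈ S.filter (fun b => a < b), G.W a b + ∑ b ∈ S.filter (fun b => b < a), G.W a b := by
    intro a _
    rw [← Finset.sum_filter_add_sum_filter_not S (fun b => a < b) (G.W a)]
    congr 1
    refine (Finset.sum_subset ?_ ?_).symm
    · intro b hb
      simp only [mem_filter] at hb ⊢
      exact ⟨hb.1, not_lt.mpr hb.2.le⟩
    · intro b hb hnb
      simp only [mem_filter, not_lt] at hb hnb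
      have : b = a := le_antisymm hb.2 (not_lt.mp fun hlt => hnb ⟨hb.1, hlt⟩)
      rw [this, G.loopless]
  rw [Finset.sum_congr rfl key, Finset.sum_add_distrib]
  have swap : ∑ a ∈ S, ∑ b ∈ S.filter (fun b => b < a), G.W a b = G.edgesIn S := by
    calc ∑ a ∈ S, ∑ b ∈ S.filter (fun b => b < a), G.W a b
        = ∑ a ∈ S, ∑ b ∈ S, if b < a then G.W a b else 0 := by
          simp [Finset.sum_filter]
      _ = ∑ b ∈ S, ∑ a ∈ S, if b < a then G.W a b else 0 := Finset.sum_comm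
      _ = ∑ b ∈ S, ∑ a ∈ S.filter (fun a => b < a), G.W a b := by
          simp [Finset.sum_filter]
      _ = G.edgesIn S := by
          refine Finset.sum_congr rfl fun b _ => Finset.sum_congr rfl fun a _ => G.symm a b
  rw [swap]
  unfold edgesIn; ring

lemma triple (G : Multigraph n)
    (h : ∀ S : Finset (Fin n), S.card = 3 → G.edgesIn S ≤ 2)
    {u v w : Fin n} (huv : u ≠ v) (huw : u ≠ w) (hvw : v ≠ w) :
    G.W u v + G.W u w + G.W v w ≤ 2 := by
  set S : Finset (Fin n) := {u, v, w} with hS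
  have hcard : S.card = 3 := by
    rw [hS]
    rw [Finset.card_insert_of_notMem (by simp only [Finset.mem_insert, Finset.mem_singleton, not_or]; exact ⟨huv, huw⟩),
        Finset.card_insert_of_notMem (Finset.notMem_singleton.mpr hvw)]
    simp
  have hdc := G.double_count S
  have hu : u ∉ ({v, w} : Finset (Fin n)) := by
    simp only [Finset.mem_insert, Finset.mem_singleton, not_or]; exact ⟨huv, huw⟩
  have hv : v ∉ ({w} : Finset (Fin n)) := Finset.notMem_singleton.mpr hvw
  have hsum : ∑ a ∈ S, ∑ b ∈ S, G.W a b
      = 2 * (G.W u v + G.W u w + G.W v w) := by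
    have h1 := G.symm v u; have h2 := G.symm w u; have h3 := G.symm w v
    rw [hS]
    rw [Finset.sum_insert hu, Finset.sum_insert hv]
    simp only [Finset.sum_insert hu, Finset.sum_insert hv, Finset.sum_singleton, G.loopless]
    omega
  have := h S hcard
  omega
variable {n : ℕ}

lemma pair_bound (G : Multigraph n) (hn : 5 ≤ n)
    (h : ∀ S : Finset (Fin n), S.card = 3 → G.edgesIn S ≤ 2)
    (u v : Fin n) (hW : 0 < G.W u v) :
    (∑ x, G.W u x) + (∑ x, G.W v x) ≤ n := by
  have huv : u ≠ v := by
    rintro rfl; rw [G.loopless] at hW; exact absurd hW (lt_irrefl 0)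
  set T : Finset (Fin n) := univ \ {u, v} with hT
  have hTcard : T.card = n - 2 := by
    rw [hT, Finset.card_sdiff_of_subset (Finset.subset_univ _)]
    rw [Finset.card_univ, Fintype.card_fin]
    congr 1
    rw [Finset.card_insert_of_notMem (Finset.notMem_singleton.mpr huv), Finset.card_singleton]
  have huniv : (univ : Finset (Fin n)) = insert u (insert v T) := by
    ext x
    simp only [Finset.mem_insert, hT, Finset.mem_sdiff, Finset.mem_univ, true_and,
      Finset.mem_insert, Finset.mem_singleton, Finset.mem_univ, iff_true]
    tauto
  have huT : u ∉ insert v T := by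
    simp only [Finset.mem_insert, hT, Finset.mem_sdiff, Finset.mem_univ, true_and,
      Finset.mem_insert, Finset.mem_singleton]
    tauto
  have hvT : v ∉ T := by
    simp only [hT, Finset.mem_sdiff, Finset.mem_univ, true_and, Finset.mem_insert,
      Finset.mem_singleton]
    tauto
  have key : ∀ w ∈ T, G.W u w + G.W v w ≤ 2 - G.W u v := by
    intro w hw
    simp only [hT, Finset.mem_sdiff, Finset.mem_univ, true_and, Finset.mem_insert,
      Finset.mem_singleton, not_or] at hw
    have := G.triple h huv (Ne.symm hw.1) (Ne.symm hw.2)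
    omega
  have hsplit : (∑ x, G.W u x) + (∑ x, G.W v x) =
      2 * G.W u v + ∑ w ∈ T, (G.W u w + G.W v w) := by
    rw [← Finset.sum_add_distrib, huniv, Finset.sum_insert huT, Finset.sum_insert hvT]
    rw [G.loopless, G.symm v u, G.loopless]
    ring
  have hbound : ∑ w ∈ T, (G.W u w + G.W v w) ≤ T.card * (2 - G.W u v) := by
    calc ∑ w ∈ T, (G.W u w + G.W v w) ≤ ∑ _w ∈ T, (2 - G.W u v) := Finset.sum_le_sum key
      _ = T.card * (2 - G.W u v) := by rw [Finset.sum_const, smul_eq_mul]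
  have hWle : G.W u v ≤ 2 := by
    obtain ⟨w, hw⟩ : T.Nonempty := by
      rw [← Finset.card_pos, hTcard]; omega
    have := key w hw
    have := G.triple h huv (by
      simp only [hT, Finset.mem_sdiff, Finset.mem_univ, true_and, Finset.mem_insert,
        Finset.mem_singleton, not_or] at hw
      exact Ne.symm hw.1) (by
      simp only [hT, Finset.mem_sdiff, Finset.mem_univ, true_and, Finset.mem_insert,
        Finset.mem_singleton, not_or] at hw
      exact Ne.symm hw.2)
    omega
  rw [hsplit]
  have h1 : 1 ≤ G.W u v := hW
  rcases (show G.W u v = 1 ∨ G.W u v = 2 by omega) with hm | hm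
  · have hb : ∑ w ∈ T, (G.W u w + G.W v w) ≤ n - 2 := by
      rw [hm, hTcard] at hbound; simpa using hbound
    rw [hm]; omega
  · have hb : ∑ w ∈ T, (G.W u w + G.W v w) ≤ 0 := by
      rw [hm, hTcard] at hbound; simpa using hbound
    rw [hm]; omega

end Multigraph

theorem mantel_multigraph (n : ℕ) (hn : 5 ≤ n) (G : Multigraph n)
    (h : ∀ S : Finset (Fin n), S.card = 3 → G.edgesIn S ≤ 2) :
    G.edgeCount ≤ n ^ 2 / 4 := by
  set E := G.edgeCount with hE
  set D : Fin n → ℕ := fun v => ∑ x, G.W v x with hD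
  have hA : ∑ v, D v = 2 * E := by
    rw [hE]
    unfold Multigraph.edgeCount
    rw [← G.double_count]
  have hsym : ∑ v : Fin n, ∑ u : Fin n, G.W v u * D u = ∑ v, D v * D v := by
    rw [Finset.sum_comm]
    refine Finset.sum_congr rfl fun u _ => ?_
    rw [← Finset.sum_mul]
    congr 1
    exact Finset.sum_congr rfl fun v _ => G.symm v u
  have hB : 2 * ∑ v, D v * D v ≤ 2 * (n * E) := by
    have lhs : ∑ v : Fin n, ∑ u : Fin n, G.W v u * (D v + D u) = 2 * ∑ v, D v * D v := by
      simp only [Nat.mul_add, Finset.sum_add_distrib]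
      have : ∀ v : Fin n, ∑ u : Fin n, G.W v u * D v = D v * D v := by
        intro v
        rw [← Finset.sum_mul]
      rw [Finset.sum_congr rfl fun v _ => this v, hsym]
      ring
    have rhs : ∑ v : Fin n, ∑ u : Fin n, G.W v u * (D v + D u) ≤
        ∑ v : Fin n, ∑ u : Fin n, G.W v u * n := by
      refine Finset.sum_le_sum fun v _ => Finset.sum_le_sum fun u _ => ?_
      rcases Nat.eq_zero_or_pos (G.W v u) with h0 | hpos
      · simp [h0]
      · exact Nat.mul_le_mul_left _ (G.pair_bound hn h v u hpos)
    have rhs2 : ∑ v : Fin n, ∑ u : Fin n, G.W v u * n = 2 * (n * E) := by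
      simp only [← Finset.sum_mul]
      rw [G.double_count]
      unfold E
      unfold Multigraph.edgeCount
      ring
    omega
  have hCS : (∑ v, D v) ^ 2 ≤ n * ∑ v, D v * D v := by
    have := sq_sum_le_card_mul_sum_sq (s := (univ : Finset (Fin n)))
      (f := fun v => (D v : ℤ))
    simp only [Finset.card_univ, Fintype.card_fin] at this
    have hcast : ((∑ v, D v : ℕ) : ℤ) ^ 2 ≤ (n : ℤ) * ((∑ v, D v * D v : ℕ) : ℤ) := by
      push_cast
      simpa only [pow_two] using this
    exact_mod_cast hcast
  have hfin : (2 * E) ^ 2 ≤ n ^ 2 * E := by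
    calc (2 * E) ^ 2 = (∑ v, D v) ^ 2 := by rw [hA]
      _ ≤ n * ∑ v, D v * D v := hCS
      _ ≤ n * (n * E) := Nat.mul_le_mul_left n (by omega)
      _ = n ^ 2 * E := by ring
  rcases Nat.eq_zero_or_pos E with h0 | hpos
  · simp [h0]
  · rw [Nat.le_div_iff_mul_le (by norm_num : 0 < 4)]
    have : 4 * E * E ≤ n ^ 2 * E := by nlinarith [hfin]
    have := Nat.le_of_mul_le_mul_right this hpos
    omega
end

section
/- The maximum number of edges of a triangle-free simple graph on n vertices equals the maximum number of edges of a loopless multigraph on n vertices, n ≥ 5, in which every 3-vertex induced subgraph has at most 2 edges; both maxima equal ⌊n²/4⌋. -/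
open Finset

namespace Multigraph
variable {n : ℕ}

lemma edgesIn_eq (G : Multigraph n) (S : Finset (Fin n)) :
    G.edgesIn S = ∑ u ∈ S, ∑ v ∈ S, if u < v then G.W u v else 0 := by
  simp [edgesIn, Finset.sum_filter]

lemma two_mul_edgesIn (G : Multigraph n) (S : Finset (Fin n)) :
    ∑ u ∈ S, ∑ v ∈ S, G.W u v = 2 * G.edgesIn S := by
  have key : ∀ u v : Fin n, G.W u v =
      (if u < v then G.W u v else 0) + (if v < u then G.W u v else 0) := by
    intro u v
    rcases lt_trichotomy u v with h | h | h
    · simp [h, asymm h]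
    · subst h; simp [G.loopless]
    · simp [h, asymm h, not_lt_of_gt h]
  calc ∑ u ∈ S, ∑ v ∈ S, G.W u v
      = ∑ u ∈ S, ∑ v ∈ S, ((if u < v then G.W u v else 0) + (if v < u then G.W u v else 0)) := by
        simp_rw [← key]
    _ = (∑ u ∈ S, ∑ v ∈ S, if u < v then G.W u v else 0)
        + ∑ u ∈ S, ∑ v ∈ S, if v < u then G.W u v else 0 := by
        simp [Finset.sum_add_distrib]
    _ = 2 * G.edgesIn S := by
        rw [Finset.sum_comm (s := S) (t := S) (f := fun u v => if v < u then G.W u v else 0)]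
        have : ∀ v u : Fin n, (if v < u then G.W u v else 0) = (if v < u then G.W v u else 0) := by
          intro v u; rw [G.symm]
        simp_rw [this, ← edgesIn_eq]
        omega

lemma sum_degree (G : Multigraph n) : ∑ v, G.degree v = 2 * G.edgeCount := by
  simpa [degree, edgeCount] using G.two_mul_edgesIn Finset.univ

lemma edgesIn_triple (G : Multigraph n) {u v w : Fin n} (huv : u ≠ v) (huw : u ≠ w)
    (hvw : v ≠ w) : G.edgesIn {u, v, w} = G.W u v + G.W u w + G.W v w := by
  have h1 : u ∉ ({v, w} : Finset (Fin n)) := by simp [huv, huw]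
  have h2 : v ∉ ({w} : Finset (Fin n)) := by simp [hvw]
  have expand : ∀ f : Fin n → ℕ, ∑ x ∈ ({u, v, w} : Finset (Fin n)), f x = f u + (f v + f w) := by
    intro f
    rw [show ({u, v, w} : Finset (Fin n)) = insert u (insert v {w}) from rfl,
      Finset.sum_insert h1, Finset.sum_insert h2, Finset.sum_singleton]
  have h := G.two_mul_edgesIn {u, v, w}
  rw [expand] at h
  simp_rw [expand] at h
  rw [G.loopless u, G.loopless v, G.loopless w, G.symm v u, G.symm w u, G.symm w v] at h
  omega

lemma exists_third (hn : 5 ≤ n) (u v : Fin n) : ∃ w : Fin n, w ≠ u ∧ w ≠ v := by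
  by_contra h
  push_neg at h
  have : (Finset.univ : Finset (Fin n)) ⊆ {u, v} := by
    intro w _
    by_cases hwu : w = u
    · simp [hwu]
    · simp [h w hwu]
  have := Finset.card_le_card this
  have h2 : ({u, v} : Finset (Fin n)).card ≤ 2 := Finset.card_insert_le _ _ |>.trans (by simp)
  simp [Finset.card_univ] at this
  omega

lemma triple_bound {G : Multigraph n}
    (hcond : ∀ S : Finset (Fin n), S.card = 3 → G.edgesIn S ≤ 2)
    {u v w : Fin n} (huv : u ≠ v) (huw : u ≠ w) (hvw : v ≠ w) :
    G.W u v + G.W u w + G.W v w ≤ 2 := by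
  rw [← G.edgesIn_triple huv huw hvw]
  apply hcond
  rw [Finset.card_insert_of_notMem (by simp [huv, huw]),
    Finset.card_insert_of_notMem (by simp [hvw]), Finset.card_singleton]

lemma degree_add_degree_le {G : Multigraph n}
    (hcond : ∀ S : Finset (Fin n), S.card = 3 → G.edgesIn S ≤ 2)
    (hn : 5 ≤ n) {u v : Fin n} (hW : 1 ≤ G.W u v) :
    G.degree u + G.degree v ≤ n := by
  have hne : u ≠ v := by
    intro h; subst h; rw [G.loopless] at hW; omega
  obtain ⟨w₀, hw₀u, hw₀v⟩ := exists_third hn u v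
  have hW2 : G.W u v ≤ 2 := by
    have := triple_bound hcond hne (Ne.symm hw₀u) (Ne.symm hw₀v)
    omega
  have hsum : G.degree u + G.degree v = ∑ w, (G.W u w + G.W v w) := by
    rw [Finset.sum_add_distrib]; rfl
  have hne' : u ∉ ({v} : Finset (Fin n)) := by simp [hne]
  have hsplit : ∑ w, (G.W u w + G.W v w) =
      ∑ w ∈ ({u, v} : Finset (Fin n)), (G.W u w + G.W v w)
      + ∑ w ∈ ({u, v} : Finset (Fin n))ᶜ, (G.W u w + G.W v w) :=
    (Finset.sum_add_sum_compl _ _).symm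
  have hin : ∑ w ∈ ({u, v} : Finset (Fin n)), (G.W u w + G.W v w) = 2 * G.W u v := by
    rw [show ({u, v} : Finset (Fin n)) = insert u {v} from rfl, Finset.sum_insert hne',
      Finset.sum_singleton, G.loopless, G.loopless, G.symm v u]
    omega
  have hout : ∑ w ∈ ({u, v} : Finset (Fin n))ᶜ, (G.W u w + G.W v w)
      ≤ (n - 2) * (2 - G.W u v) := by
    have hcard : ({u, v} : Finset (Fin n))ᶜ.card = n - 2 := by
      rw [Finset.card_compl, Finset.card_insert_of_notMem hne', Finset.card_singleton]
      simp
    calc ∑ w ∈ ({u, v} : Finset (Fin n))ᶜ, (G.W u w + G.W v w)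
        ≤ ∑ _w ∈ ({u, v} : Finset (Fin n))ᶜ, (2 - G.W u v) := by
          apply Finset.sum_le_sum
          intro w hw
          simp only [Finset.mem_compl, Finset.mem_insert, Finset.mem_singleton, not_or] at hw
          have := triple_bound hcond hne (Ne.symm hw.1) (Ne.symm hw.2)
          omega
      _ = (n - 2) * (2 - G.W u v) := by rw [Finset.sum_const, hcard, smul_eq_mul]
  set a := G.W u v with ha
  have : G.degree u + G.degree v ≤ 2 * a + (n - 2) * (2 - a) := by
    rw [hsum, hsplit, hin]; omega
  interval_cases a <;> omega

lemma sum_degree_sq_le {G : Multigraph n}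
    (hcond : ∀ S : Finset (Fin n), S.card = 3 → G.edgesIn S ≤ 2)
    (hn : 5 ≤ n) : ∑ v, (G.degree v) ^ 2 ≤ n * G.edgeCount := by
  have key : 2 * ∑ v, (G.degree v) ^ 2 = ∑ u, ∑ v, G.W u v * (G.degree u + G.degree v) := by
    have h1 : ∑ u, ∑ v, G.W u v * G.degree u = ∑ v, (G.degree v) ^ 2 := by
      apply Finset.sum_congr rfl
      intro u _
      rw [← Finset.sum_mul, sq]
      rfl
    have h2 : ∑ u, ∑ v, G.W u v * G.degree v = ∑ v, (G.degree v) ^ 2 := by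
      rw [Finset.sum_comm]
      apply Finset.sum_congr rfl
      intro v _
      simp_rw [fun u => G.symm u v]
      rw [← Finset.sum_mul, sq]
      rfl
    simp_rw [Nat.mul_add, Finset.sum_add_distrib, h1, h2]
    omega
  have bound : ∑ u, ∑ v, G.W u v * (G.degree u + G.degree v) ≤ ∑ u, ∑ v, G.W u v * n := by
    apply Finset.sum_le_sum; intro u _
    apply Finset.sum_le_sum; intro v _
    rcases Nat.eq_zero_or_pos (G.W u v) with h | h
    · simp [h]
    · exact Nat.mul_le_mul_left _ (degree_add_degree_le hcond hn h)
  have htot : ∑ u, ∑ v, G.W u v * n = 2 * G.edgeCount * n := by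
    simp_rw [← Finset.sum_mul]
    rw [G.two_mul_edgesIn]
    rfl
  have final : 2 * ∑ v, (G.degree v) ^ 2 ≤ 2 * (n * G.edgeCount) := by
    rw [key]
    calc ∑ u, ∑ v, G.W u v * (G.degree u + G.degree v)
        ≤ ∑ u, ∑ v, G.W u v * n := bound
      _ = 2 * G.edgeCount * n := htot
      _ = 2 * (n * G.edgeCount) := by ring
  exact Nat.le_of_mul_le_mul_left final (by norm_num)

lemma edgeCount_le {G : Multigraph n}
    (hcond : ∀ S : Finset (Fin n), S.card = 3 → G.edgesIn S ≤ 2)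
    (hn : 5 ≤ n) : G.edgeCount ≤ n ^ 2 / 4 := by
  have cs : (∑ v, G.degree v) ^ 2 ≤ n * ∑ v, (G.degree v) ^ 2 := by
    have := sq_sum_le_card_mul_sum_sq (s := (Finset.univ : Finset (Fin n)))
      (f := fun v => G.degree v)
    simpa [Finset.card_univ] using this
  rw [G.sum_degree] at cs
  have h1 : 4 * G.edgeCount ^ 2 ≤ n ^ 2 * G.edgeCount := by
    have h2 := Nat.mul_le_mul_left n (sum_degree_sq_le hcond hn)
    calc 4 * G.edgeCount ^ 2 = (2 * G.edgeCount) ^ 2 := by ring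
      _ ≤ n * ∑ v, (G.degree v) ^ 2 := cs
      _ ≤ n * (n * G.edgeCount) := h2
      _ = n ^ 2 * G.edgeCount := by ring
  rcases Nat.eq_zero_or_pos G.edgeCount with h | h
  · simp [h]
  · rw [Nat.le_div_iff_mul_le (by norm_num)]
    have : 4 * G.edgeCount ^ 2 = (4 * G.edgeCount) * G.edgeCount := by ring
    rw [this, sq] at h1
    have h4 := Nat.le_of_mul_le_mul_right h1 h
    have hnn : n * n = n ^ 2 := (sq n).symm
    omega

end Multigraph

def Multigraph.indicator {n : ℕ} (G : SimpleGraph (Fin n)) [DecidableRel G.Adj] :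
    Multigraph n where
  W u v := if G.Adj u v then 1 else 0
  symm u v := by simp [SimpleGraph.adj_comm]
  loopless v := by simp

lemma indicator_edgeCount {n : ℕ} (G : SimpleGraph (Fin n)) [DecidableRel G.Adj] :
    (Multigraph.indicator G).edgeCount = G.edgeSet.ncard := by
  have hdeg : ∀ u, (Multigraph.indicator G).degree u = G.degree u := by
    intro u
    rw [SimpleGraph.degree, SimpleGraph.neighborFinset_eq_filter, Finset.card_filter]
    rfl
  have h2 : 2 * (Multigraph.indicator G).edgeCount = 2 * G.edgeFinset.card := by
    rw [← Multigraph.sum_degree, ← SimpleGraph.sum_degrees_eq_twice_card_edges]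
    exact Finset.sum_congr rfl fun u _ => hdeg u
  have h3 : G.edgeSet.ncard = G.edgeFinset.card := by
    rw [← SimpleGraph.coe_edgeFinset, Set.ncard_coe_finset]
  omega

lemma indicator_cond {n : ℕ} (G : SimpleGraph (Fin n)) [DecidableRel G.Adj]
    (hG : G.CliqueFree 3) :
    ∀ S : Finset (Fin n), S.card = 3 → (Multigraph.indicator G).edgesIn S ≤ 2 := by
  intro S hS
  obtain ⟨u, v, w, huv, huw, hvw, rfl⟩ := Finset.card_eq_three.mp hS
  rw [Multigraph.edgesIn_triple _ huv huw hvw]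
  show (if G.Adj u v then 1 else 0) + (if G.Adj u w then 1 else 0)
      + (if G.Adj v w then 1 else 0) ≤ 2
  by_cases h1 : G.Adj u v <;> by_cases h2 : G.Adj u w <;> by_cases h3 : G.Adj v w <;>
    simp [h1, h2, h3]
  exact hG _ (SimpleGraph.is3Clique_triple_iff.mpr ⟨h1, h2, h3⟩)

def biGraph (n : ℕ) : SimpleGraph (Fin n) where
  Adj u v := ((u : ℕ) < n / 2 ∧ ¬ (v : ℕ) < n / 2) ∨ ((v : ℕ) < n / 2 ∧ ¬ (u : ℕ) < n / 2)
  symm := by constructor; intro u v h; tauto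
  loopless := by constructor; intro v h; rcases h with ⟨a, b⟩ | ⟨a, b⟩ <;> exact b a

instance {n : ℕ} : DecidableRel (biGraph n).Adj := fun u v =>
  inferInstanceAs (Decidable (((u : ℕ) < n / 2 ∧ ¬ (v : ℕ) < n / 2)
    ∨ ((v : ℕ) < n / 2 ∧ ¬ (u : ℕ) < n / 2)))

lemma biGraph_cliqueFree (n : ℕ) : (biGraph n).CliqueFree 3 := by
  have hcol : (biGraph n).Colorable 2 := by
    refine ⟨SimpleGraph.Coloring.mk (fun v => if (v : ℕ) < n / 2 then 0 else 1) ?_⟩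
    intro u v hadj
    rcases hadj with ⟨a, b⟩ | ⟨a, b⟩ <;> simp [a, b]
  exact hcol.cliqueFree (by norm_num)

lemma card_filter_lt {n : ℕ} (k : ℕ) (h : k ≤ n) :
    (Finset.univ.filter fun v : Fin n => (v : ℕ) < k).card = k := by
  rw [Finset.card_filter]
  rw [Fin.sum_univ_eq_sum_range (fun i => if i < k then 1 else 0)]
  rw [← Finset.sum_filter]
  have hfil : (Finset.range n).filter (fun i => i < k) = Finset.range k := by
    ext i; simp [Finset.mem_range]; omega
  simp [hfil]

lemma div_identity (n : ℕ) : n / 2 * (n - n / 2) = n ^ 2 / 4 := by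
  rcases Nat.even_or_odd n with ⟨m, hm⟩ | ⟨m, hm⟩
  · subst hm
    have h1 : (m + m) / 2 = m := by omega
    have h2 : (m + m) ^ 2 = 4 * (m * m) := by ring
    rw [h1, h2, Nat.mul_div_cancel_left _ (by norm_num : 0 < 4),
      show m + m - m = m from by omega]
  · subst hm
    have h1 : (2 * m + 1) / 2 = m := by omega
    have h2 : (2 * m + 1) ^ 2 = 4 * (m * m + m) + 1 := by ring
    have h3 : ∀ q : ℕ, (4 * q + 1) / 4 = q := fun q => by omega
    rw [h1, h2, h3, show 2 * m + 1 - m = m + 1 from by omega]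
    ring

lemma biGraph_edgeCount {n : ℕ} :
    (Multigraph.indicator (biGraph n)).edgeCount = n ^ 2 / 4 := by
  set k := n / 2 with hk
  have hkn : k ≤ n := Nat.div_le_self _ _
  have hA : (Finset.univ.filter fun v : Fin n => (v : ℕ) < k).card = k := card_filter_lt k hkn
  have hB : (Finset.univ.filter fun v : Fin n => ¬ (v : ℕ) < k).card = n - k := by
    have := Finset.card_filter_add_card_filter_not
      (s := (Finset.univ : Finset (Fin n))) (p := fun v : Fin n => (v : ℕ) < k)
    rw [hA, Finset.card_univ, Fintype.card_fin] at this
    omega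
  have hrow : ∀ u : Fin n,
      (∑ v, (Multigraph.indicator (biGraph n)).W u v) = if (u : ℕ) < k then n - k else k := by
    intro u
    have : ∀ v : Fin n, (Multigraph.indicator (biGraph n)).W u v =
        if (u : ℕ) < k then (if ¬ (v : ℕ) < k then 1 else 0) else (if (v : ℕ) < k then 1 else 0) := by
      intro v
      show (if (biGraph n).Adj u v then 1 else 0) = _
      by_cases h1 : (u : ℕ) < k <;> by_cases h2 : (v : ℕ) < k <;>
        simp [biGraph, h1, h2, ← hk]
    simp_rw [this]
    by_cases h1 : (u : ℕ) < k
    · simp only [h1, if_true]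
      rw [← Finset.sum_filter, Finset.sum_const, hB, smul_eq_mul, mul_one]
    · simp only [h1, if_false]
      rw [← Finset.sum_filter, Finset.sum_const, hA, smul_eq_mul, mul_one]
  have h2 : 2 * (Multigraph.indicator (biGraph n)).edgeCount = 2 * (k * (n - k)) := by
    rw [show (Multigraph.indicator (biGraph n)).edgeCount
        = (Multigraph.indicator (biGraph n)).edgesIn Finset.univ from rfl,
      ← Multigraph.two_mul_edgesIn]
    simp_rw [hrow]
    rw [Finset.sum_ite, Finset.sum_const, Finset.sum_const, hA, hB]
    simp [Nat.mul_comm]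
    ring
  have hdi := div_identity n
  rw [← hk] at hdi
  omega


theorem mantel_simple_and_multigraph (n : ℕ) (hn : 5 ≤ n) :
    IsGreatest {m | ∃ G : SimpleGraph (Fin n), G.CliqueFree 3 ∧ G.edgeSet.ncard = m}
      (n ^ 2 / 4) ∧
    IsGreatest {m | ∃ G : Multigraph n,
      (∀ S : Finset (Fin n), S.card = 3 → G.edgesIn S ≤ 2) ∧ G.edgeCount = m}
      (n ^ 2 / 4) := by
  constructor
  · constructor
    · exact ⟨biGraph n, biGraph_cliqueFree n, by
        rw [← indicator_edgeCount]; exact biGraph_edgeCount⟩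
    · rintro m ⟨G, hfree, rfl⟩
      classical
      rw [← indicator_edgeCount G]
      exact Multigraph.edgeCount_le (indicator_cond G hfree) hn
  · constructor
    · exact ⟨Multigraph.indicator (biGraph n), indicator_cond _ (biGraph_cliqueFree n),
        biGraph_edgeCount⟩
    · rintro m ⟨G, hcond, rfl⟩
      exact Multigraph.edgeCount_le hcond hn
end

section
/- For n ≥ k ≥ 3, the maximum number of edges of an n-vertex simple graph in which every k-vertex induced subgraph has at most k − 1 edges equals the maximum number of edges of an n-vertex simple graph containing no cycle of length ℓ for any 3 ≤ ℓ ≤ k. -/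
open Finset

namespace ExFAux
open SimpleGraph Set

variable {n : ℕ}

/-- Edges of `G` with both endpoints in `S`. -/
def edgesWithin (G : SimpleGraph (Fin n)) (S : Set (Fin n)) : Set (Sym2 (Fin n)) :=
  {e ∈ G.edgeSet | ∀ x ∈ e, x ∈ S}

/-- Number of edges of `G` with both endpoints in `S`. -/
noncomputable def eIn (G : SimpleGraph (Fin n)) (S : Set (Fin n)) : ℕ :=
  (edgesWithin G S).ncard

lemma pair_mem_edgesWithin {G : SimpleGraph (Fin n)} {S : Set (Fin n)} {x y : Fin n} :
    s(x, y) ∈ edgesWithin G S ↔ G.Adj x y ∧ x ∈ S ∧ y ∈ S := by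
  constructor
  · rintro ⟨he, hm⟩
    exact ⟨he, hm x (by simp), hm y (by simp)⟩
  · rintro ⟨ha, hx, hy⟩
    refine ⟨ha, ?_⟩
    intro z hz
    rcases Sym2.mem_iff.1 hz with rfl | rfl <;> assumption

lemma eIn_mono {G : SimpleGraph (Fin n)} {S T : Set (Fin n)} (h : S ⊆ T) :
    eIn G S ≤ eIn G T := by
  apply Set.ncard_le_ncard _ (Set.toFinite _)
  rintro e ⟨he, hm⟩
  exact ⟨he, fun x hx => h (hm x hx)⟩

lemma edgesWithin_disjoint {G : SimpleGraph (Fin n)} {A B : Set (Fin n)} (h : Disjoint A B) :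
    Disjoint (edgesWithin G A) (edgesWithin G B) := by
  rw [Set.disjoint_left]
  rintro e heA heB
  induction e with
  | h x y =>
    rcases pair_mem_edgesWithin.1 heA with ⟨_, hx, _⟩
    rcases pair_mem_edgesWithin.1 heB with ⟨_, hx', _⟩
    exact (Set.disjoint_left.1 h) hx hx'

lemma eIn_superadd {G : SimpleGraph (Fin n)} {A B : Set (Fin n)} (h : Disjoint A B) :
    eIn G A + eIn G B ≤ eIn G (A ∪ B) := by
  rw [eIn, eIn, ← Set.ncard_union_eq (edgesWithin_disjoint h) (Set.toFinite _) (Set.toFinite _)]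
  apply Set.ncard_le_ncard _ (Set.toFinite _)
  rintro e (⟨he, hm⟩ | ⟨he, hm⟩)
  · exact ⟨he, fun x hx => Or.inl (hm x hx)⟩
  · exact ⟨he, fun x hx => Or.inr (hm x hx)⟩

/-- A set closed under adjacency. -/
def ClosedSet (G : SimpleGraph (Fin n)) (A : Set (Fin n)) : Prop :=
  ∀ ⦃x y : Fin n⦄, G.Adj x y → x ∈ A → y ∈ A

lemma eIn_union_eq {G : SimpleGraph (Fin n)} {A B : Set (Fin n)} (h : Disjoint A B)
    (hA : ClosedSet G A) : eIn G (A ∪ B) = eIn G A + eIn G B := by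
  rw [eIn, eIn, eIn, ← Set.ncard_union_eq (edgesWithin_disjoint h) (Set.toFinite _) (Set.toFinite _)]
  congr 1
  apply Set.Subset.antisymm
  · rintro e he
    induction e with
    | h x y =>
      rcases pair_mem_edgesWithin.1 he with ⟨ha, hx, hy⟩
      rcases hx with hx | hx
      · exact Or.inl (pair_mem_edgesWithin.2 ⟨ha, hx, hA ha hx⟩)
      · rcases hy with hy | hy
        · exact Or.inl (pair_mem_edgesWithin.2 ⟨ha, hA ha.symm hy, hy⟩)
        · exact Or.inr (pair_mem_edgesWithin.2 ⟨ha, hx, hy⟩)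
  · rintro e (⟨he, hm⟩ | ⟨he, hm⟩)
    · exact ⟨he, fun x hx => Or.inl (hm x hx)⟩
    · exact ⟨he, fun x hx => Or.inr (hm x hx)⟩

lemma edgesWithin_singleton (G : SimpleGraph (Fin n)) (v : Fin n) :
    edgesWithin G {v} = ∅ := by
  ext e
  induction e with
  | h x y =>
    simp only [Set.mem_empty_iff_false, iff_false]
    intro he
    rcases pair_mem_edgesWithin.1 he with ⟨ha, hx, hy⟩
    rw [Set.mem_singleton_iff] at hx hy
    subst hx; subst hy
    exact G.loopless.irrefl _ ha

lemma eIn_le_diff_add (G : SimpleGraph (Fin n)) (S : Set (Fin n)) (v : Fin n) :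
    eIn G S ≤ eIn G (S \ {v}) + {u | u ∈ S ∧ G.Adj v u}.ncard := by
  have hsub : edgesWithin G S ⊆
      edgesWithin G (S \ {v}) ∪ ((fun u => s(v, u)) '' {u | u ∈ S ∧ G.Adj v u}) := by
    rintro e he
    induction e with
    | h x y =>
      rcases pair_mem_edgesWithin.1 he with ⟨ha, hx, hy⟩
      by_cases hvx : x = v
      · subst hvx
        exact Or.inr ⟨y, ⟨hy, ha⟩, rfl⟩
      · by_cases hvy : y = v
        · subst hvy
          exact Or.inr ⟨x, ⟨hx, ha.symm⟩, Sym2.eq_swap⟩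
        · exact Or.inl (pair_mem_edgesWithin.2 ⟨ha, ⟨hx, hvx⟩, ⟨hy, hvy⟩⟩)
  calc eIn G S ≤ (edgesWithin G (S \ {v}) ∪ ((fun u => s(v, u)) '' {u | u ∈ S ∧ G.Adj v u})).ncard :=
        Set.ncard_le_ncard hsub (Set.toFinite _)
    _ ≤ eIn G (S \ {v}) + ((fun u => s(v, u)) '' {u | u ∈ S ∧ G.Adj v u}).ncard :=
        Set.ncard_union_le _ _
    _ ≤ _ := Nat.add_le_add_left (Set.ncard_image_le (Set.toFinite _)) _

lemma eIn_insert_succ {G : SimpleGraph (Fin n)} {U : Set (Fin n)} {x y : Fin n}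
    (hx : x ∈ U) (hy : y ∉ U) (ha : G.Adj x y) :
    eIn G U + 1 ≤ eIn G (insert y U) := by
  have h1 : insert s(x, y) (edgesWithin G U) ⊆ edgesWithin G (insert y U) := by
    rintro e (rfl | he)
    · exact pair_mem_edgesWithin.2 ⟨ha, Or.inr hx, Or.inl rfl⟩
    · exact ⟨he.1, fun z hz => Or.inr (he.2 z hz)⟩
  have h2 : s(x, y) ∉ edgesWithin G U := by
    intro he
    exact hy (pair_mem_edgesWithin.1 he).2.2
  have heq : (insert s(x,y) (edgesWithin G U)).ncard = eIn G U + 1 := by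
    rw [Set.ncard_insert_of_notMem h2 (Set.toFinite _)]
    rfl
  rw [← heq]
  exact Set.ncard_le_ncard h1 (Set.toFinite _)

lemma eIn_univ (G : SimpleGraph (Fin n)) : eIn G Set.univ = G.edgeSet.ncard := by
  unfold eIn edgesWithin
  congr 1
  ext e
  simp

/-- In a path starting at `u`, any edge at `u` goes to the second vertex. -/
lemma edge_at_head {G : SimpleGraph (Fin n)} {u v x : Fin n} {p : G.Walk u v}
    (hp : p.IsPath) (hx : s(u, x) ∈ p.edges) : x = p.getVert 1 := by
  cases p with
  | nil => simp at hx
  | cons hadj q =>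
    rw [SimpleGraph.Walk.edges_cons, List.mem_cons] at hx
    rcases hx with hx | hx
    · rw [Sym2.eq_iff] at hx
      rcases hx with ⟨_, rfl⟩ | ⟨h1, h2⟩
      · simp [SimpleGraph.Walk.getVert_cons_succ]
      · exact absurd h1 hadj.ne
    · exfalso
      have := SimpleGraph.Walk.fst_mem_support_of_mem_edges _ hx
      rw [SimpleGraph.Walk.cons_isPath_iff] at hp
      exact hp.2 this

/-- Core lemma: a nonempty set spanning at least as many edges as vertices contains a cycle. -/
lemma exists_cycle_of_dense (G : SimpleGraph (Fin n)) :
    ∀ (m : ℕ) (S : Set (Fin n)), S.ncard = m → S.Nonempty → S.ncard ≤ eIn G S →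
    ∃ (u : Fin n) (c : G.Walk u u), c.IsCycle ∧ ∀ x ∈ c.support, x ∈ S := by
  intro m
  induction m using Nat.strong_induction_on with
  | _ m ih =>
    intro S hm hne hE
    by_cases hlow : ∃ v ∈ S, {u | u ∈ S ∧ G.Adj v u}.ncard ≤ 1
    · obtain ⟨v, hv, hdeg⟩ := hlow
      set S' := S \ {v} with hS'
      have hm' : S'.ncard = m - 1 := by
        rw [hS', Set.ncard_diff_singleton_of_mem hv, hm]
      have hmpos : 1 ≤ m := by
        rw [← hm]
        exact (Set.ncard_pos (Set.toFinite _)).2 hne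
      have hne' : S'.Nonempty := by
        by_contra hcon
        rw [Set.not_nonempty_iff_eq_empty] at hcon
        have hSv : S = {v} := by
          apply Set.Subset.antisymm
          · intro x hx
            by_contra hxv
            have hmem : x ∈ S' := ⟨hx, hxv⟩
            rw [hcon] at hmem
            exact hmem
          · intro x hx
            rw [Set.mem_singleton_iff] at hx; subst hx; exact hv
        rw [hSv] at hE
        rw [eIn, edgesWithin_singleton] at hE
        simp [Set.ncard_singleton] at hE
      have hE' : S'.ncard ≤ eIn G S' := by
        have h1 := eIn_le_diff_add G S v
        rw [← hS'] at h1
        have h2 : S.ncard ≤ eIn G S' + 1 := by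
          calc S.ncard ≤ eIn G S := hE
            _ ≤ eIn G S' + {u | u ∈ S ∧ G.Adj v u}.ncard := h1
            _ ≤ eIn G S' + 1 := Nat.add_le_add_left hdeg _
        rw [hm] at h2
        rw [hm']
        omega
      have hlt : m - 1 < m := by omega
      obtain ⟨u, c, hc, hsupp⟩ := ih (m - 1) hlt S' hm' hne' hE'
      exact ⟨u, c, hc, fun x hx => (hsupp x hx).1⟩
    · push_neg at hlow
      have htwo : ∀ v ∈ S, ∃ a b, a ∈ S ∧ b ∈ S ∧ G.Adj v a ∧ G.Adj v b ∧ a ≠ b := by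
        intro v hv
        have h2 : 1 < {u | u ∈ S ∧ G.Adj v u}.ncard := hlow v hv
        rw [Set.one_lt_ncard_iff (Set.toFinite _)] at h2
        obtain ⟨a, b, ha, hb, hab⟩ := h2
        exact ⟨a, b, ha.1, hb.1, ha.2, hb.2, hab⟩
      -- extension argument
      have hext : ∀ (m' : ℕ) (u v : Fin n) (p : G.Walk u v), p.IsPath →
          (∀ x ∈ p.support, x ∈ S) → n ≤ p.length + m' →
          ∃ (w : Fin n) (c : G.Walk w w), c.IsCycle ∧ ∀ x ∈ c.support, x ∈ S := by
        intro m'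
        induction m' with
        | zero =>
          intro u v p hp hsupp hlen
          exfalso
          have hcard : p.support.toFinset.card ≤ n := by
            have := Finset.card_le_univ p.support.toFinset
            simpa using this
          rw [List.toFinset_card_of_nodup hp.support_nodup, SimpleGraph.Walk.length_support] at hcard
          omega
        | succ m' ihm =>
          intro u v p hp hsupp hlen
          obtain ⟨a, b, haS, hbS, hva, hvb, hab⟩ := htwo u (hsupp u p.start_mem_support)
          by_cases hfresh : ∃ w, w ∈ S ∧ G.Adj u w ∧ w ∉ p.support
          · obtain ⟨w, hwS, hadj, hwp⟩ := hfresh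
            apply ihm w v (SimpleGraph.Walk.cons hadj.symm p) (hp.cons hwp)
            · intro x hx
              rw [SimpleGraph.Walk.support_cons, List.mem_cons] at hx
              rcases hx with rfl | hx
              · exact hwS
              · exact hsupp x hx
            · rw [SimpleGraph.Walk.length_cons]
              omega
          · push_neg at hfresh
            have haP : a ∈ p.support := hfresh a haS hva
            have hbP : b ∈ p.support := hfresh b hbS hvb
            -- choose w among a,b different from second vertex
            obtain ⟨w, hwS, hadj, hwP, hwne⟩ :
                ∃ w, w ∈ S ∧ G.Adj u w ∧ w ∈ p.support ∧ w ≠ p.getVert 1 := by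
              by_cases hag : a = p.getVert 1
              · exact ⟨b, hbS, hvb, hbP, by rw [← hag]; exact hab.symm⟩
              · exact ⟨a, haS, hva, haP, hag⟩
            set q := p.takeUntil w hwP with hq
            have hqpath : q.IsPath := hp.takeUntil hwP
            have hedge : s(w, u) ∉ q.edges := by
              intro hmem
              have : s(u, w) ∈ p.edges := by
                have := SimpleGraph.Walk.edges_takeUntil_subset p hwP hmem
                rwa [Sym2.eq_swap] at this
              exact hwne (edge_at_head hp this)
            have hcyc : (SimpleGraph.Walk.cons hadj.symm q).IsCycle := by
              rw [SimpleGraph.Walk.cons_isCycle_iff]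
              exact ⟨hqpath, hedge⟩
            refine ⟨w, _, hcyc, ?_⟩
            intro x hx
            rw [SimpleGraph.Walk.support_cons, List.mem_cons] at hx
            rcases hx with rfl | hx
            · exact hwS
            · exact hsupp x (SimpleGraph.Walk.support_takeUntil_subset p hwP hx)
      obtain ⟨v₀, hv₀⟩ := hne
      exact hext n v₀ v₀ (SimpleGraph.Walk.nil' v₀) (SimpleGraph.Walk.IsPath.nil)
        (by intro x hx; simp at hx; subst hx; exact hv₀) (by simp)

section Comp

variable {G : SimpleGraph (Fin n)}

/-- The connected component of `v` as a vertex set. -/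
def compS (G : SimpleGraph (Fin n)) (v : Fin n) : Set (Fin n) := {u | G.Reachable v u}

lemma mem_compS_self (G : SimpleGraph (Fin n)) (v : Fin n) : v ∈ compS G v := Reachable.refl v

lemma compS_closed (G : SimpleGraph (Fin n)) (v : Fin n) : ClosedSet G (compS G v) :=
  fun _ _ hadj hx => Reachable.trans hx hadj.reachable

lemma compS_eq_of_mem {v u : Fin n} (h : u ∈ compS G v) : compS G u = compS G v := by
  ext z
  exact ⟨fun hz => Reachable.trans h hz, fun hz => Reachable.trans (Reachable.symm h) hz⟩

lemma compS_eq_of_adj {v u : Fin n} (h : G.Adj v u) : compS G u = compS G v :=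
  compS_eq_of_mem h.reachable

lemma closed_walk_end {X : Set (Fin n)} (hX : ClosedSet G X) {a b : Fin n}
    (p : G.Walk a b) (ha : a ∈ X) : b ∈ X := by
  induction p with
  | nil => exact ha
  | cons h q ih => exact ih (hX h ha)

lemma compS_subset_of_closed {X : Set (Fin n)} (hX : ClosedSet G X) {v : Fin n}
    (hv : v ∈ X) : compS G v ⊆ X := by
  intro u hu
  obtain ⟨p⟩ := hu
  exact closed_walk_end hX p hv

lemma walk_support_subset_comp {a b : Fin n} (p : G.Walk a b) :
    ∀ x ∈ p.support, x ∈ compS G a := by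
  induction p with
  | nil =>
    intro x hx
    rw [SimpleGraph.Walk.mem_support_nil_iff] at hx
    subst hx
    exact mem_compS_self G _
  | cons h q ih =>
    intro x hx
    rw [SimpleGraph.Walk.support_cons, List.mem_cons] at hx
    rcases hx with rfl | hx
    · exact mem_compS_self G _
    · exact Reachable.trans h.reachable (ih x hx)

lemma closed_of_comp_pred (G : SimpleGraph (Fin n)) (P : Set (Fin n) → Prop) :
    ClosedSet G {v | P (compS G v)} := by
  intro x y hxy hx
  have : compS G y = compS G x := compS_eq_of_adj hxy
  simpa [Set.mem_setOf_eq, this] using hx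

lemma ClosedSet.compl {X : Set (Fin n)} (hX : ClosedSet G X) : ClosedSet G Xᶜ := by
  intro x y hxy hx hy
  exact hx (hX hxy.symm hy)

lemma ClosedSet.diff {X Y : Set (Fin n)} (hX : ClosedSet G X) (hY : ClosedSet G Y) :
    ClosedSet G (X \ Y) := by
  intro x y hxy hx
  refine ⟨hX hxy hx.1, fun hy => hx.2 (hY hxy.symm hy)⟩

lemma conn_step {v : Fin n} {U : Set (Fin n)} (hU : U ⊆ compS G v) (hne : U.Nonempty)
    (hproper : (compS G v \ U).Nonempty) :
    ∃ x y, x ∈ U ∧ y ∈ compS G v \ U ∧ G.Adj x y := by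
  obtain ⟨u₀, hu₀⟩ := hne
  obtain ⟨y₀, hy₀⟩ := hproper
  have hreach : G.Reachable u₀ y₀ := Reachable.trans (Reachable.symm (hU hu₀)) hy₀.1
  obtain ⟨p⟩ := hreach
  -- find crossing edge along p
  have cross : ∀ {a b : Fin n} (q : G.Walk a b), a ∈ U → b ∉ U →
      ∃ x y, x ∈ U ∧ y ∉ U ∧ y ∈ q.support ∧ G.Adj x y := by
    intro a b q
    induction q with
    | nil => intro ha hb; exact absurd ha hb
    | cons h q ih =>
      intro ha hb
      rename_i a' c' b'
      by_cases hc : c' ∈ U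
      · obtain ⟨x, y, hx, hy, hysupp, hadj⟩ := ih hc hb
        refine ⟨x, y, hx, hy, ?_, hadj⟩
        rw [SimpleGraph.Walk.support_cons]
        exact List.mem_cons_of_mem _ hysupp
      · refine ⟨a', c', ha, hc, ?_, h⟩
        rw [SimpleGraph.Walk.support_cons]
        exact List.mem_cons_of_mem _ q.start_mem_support
  obtain ⟨x, y, hx, hy, hysupp, hadj⟩ := cross p hu₀ hy₀.2
  refine ⟨x, y, hx, ⟨?_, hy⟩, hadj⟩
  have := walk_support_subset_comp p y hysupp
  rw [compS_eq_of_mem (hU hu₀)] at this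
  exact this

lemma grow (G : SimpleGraph (Fin n)) {v : Fin n} :
    ∀ (d : ℕ) (U : Set (Fin n)), U ⊆ compS G v → U.Nonempty →
      U.ncard + d ≤ (compS G v).ncard →
      ∃ U', U ⊆ U' ∧ U' ⊆ compS G v ∧ U'.ncard = U.ncard + d ∧ eIn G U + d ≤ eIn G U' := by
  intro d
  induction d with
  | zero =>
    intro U hU hne _
    exact ⟨U, subset_rfl, hU, by omega, by omega⟩
  | succ d ihd =>
    intro U hU hne hcard
    have hproper : (compS G v \ U).Nonempty := by
      by_contra hcon
      rw [Set.not_nonempty_iff_eq_empty, Set.diff_eq_empty] at hcon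
      have : U = compS G v := Set.Subset.antisymm hU hcon
      rw [this] at hcard
      omega
    obtain ⟨x, y, hx, hy, hadj⟩ := conn_step hU hne hproper
    have hyU : y ∉ U := hy.2
    set U₁ := insert y U with hU₁
    have hcard₁ : U₁.ncard = U.ncard + 1 := Set.ncard_insert_of_notMem hyU (Set.toFinite _)
    have hsub₁ : U₁ ⊆ compS G v := Set.insert_subset hy.1 hU
    have hfacts : U₁.ncard + d ≤ (compS G v).ncard := by omega
    obtain ⟨U', hUU', hU'C, hcardU', heIn'⟩ := ihd U₁ hsub₁ ⟨y, Set.mem_insert _ _⟩ hfacts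
    refine ⟨U', subset_trans (Set.subset_insert _ _) hUU', hU'C, by omega, ?_⟩
    have hstep := eIn_insert_succ hx hyU hadj
    rw [← hU₁] at hstep
    omega

lemma eIn_empty (G : SimpleGraph (Fin n)) : eIn G (∅ : Set (Fin n)) = 0 := by
  have : edgesWithin G (∅ : Set (Fin n)) = ∅ := by
    ext e
    induction e with
    | h x y =>
      simp only [Set.mem_empty_iff_false, iff_false]
      intro he
      exact (pair_mem_edgesWithin.1 he).2.1
  rw [eIn, this, Set.ncard_empty]

lemma eIn_singleton (G : SimpleGraph (Fin n)) (v : Fin n) : eIn G {v} = 0 := by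
  rw [eIn, edgesWithin_singleton, Set.ncard_empty]

/-- connected piece of prescribed size with at least size−1 edges -/
lemma tool_piece (G : SimpleGraph (Fin n)) (v : Fin n) (R : ℕ) (h1 : 1 ≤ R)
    (hR : R ≤ (compS G v).ncard) :
    ∃ T, T ⊆ compS G v ∧ T.ncard = R ∧ R ≤ eIn G T + 1 := by
  have hsingle : ({v} : Set (Fin n)) ⊆ compS G v :=
    Set.singleton_subset_iff.2 (mem_compS_self G v)
  have hps : ({v} : Set (Fin n)).ncard = 1 := Set.ncard_singleton v
  obtain ⟨T, _, hTC, hTcard, hTe⟩ := grow G (R - 1) ({v} : Set (Fin n)) hsingle ⟨v, rfl⟩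
    (by rw [hps]; omega)
  rw [eIn_singleton] at hTe
  exact ⟨T, hTC, by omega, by omega⟩

lemma end_mem_support_tail {u : Fin n} (c : G.Walk u u) (hne : c.length ≠ 0) :
    u ∈ c.support.tail := by
  cases c with
  | nil => simp at hne
  | cons h q =>
    simp only [SimpleGraph.Walk.support_cons, List.tail_cons]
    exact q.end_mem_support

lemma cycle_support_ncard {u : Fin n} {c : G.Walk u u} (hc : c.IsCycle) :
    {x | x ∈ c.support}.ncard = c.length := by
  have h3 := hc.three_le_length
  have hlen0 : c.support.length = c.length + 1 := c.length_support
  have hlen : c.support.tail.length = c.length := by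
    have := @List.length_tail _ c.support
    omega
  have huin : u ∈ c.support.tail := end_mem_support_tail c (by omega)
  have hseteq : {x | x ∈ c.support} = {x | x ∈ c.support.tail} := by
    ext x
    simp only [Set.mem_setOf_eq]
    constructor
    · intro hx
      rw [SimpleGraph.Walk.mem_support_iff] at hx
      rcases hx with rfl | hx
      · exact huin
      · exact hx
    · intro hx
      rw [SimpleGraph.Walk.mem_support_iff]
      exact Or.inr hx
  rw [hseteq]
  have hco : {x | x ∈ c.support.tail} = ↑c.support.tail.toFinset := by
    ext x; simp
  rw [hco, Set.ncard_coe_finset, List.toFinset_card_of_nodup hc.support_nodup, hlen]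

lemma eIn_cycle_support {u : Fin n} {c : G.Walk u u} (hc : c.IsCycle) :
    c.length ≤ eIn G {x | x ∈ c.support} := by
  have hsub : ∀ e ∈ c.edges, e ∈ edgesWithin G {x | x ∈ c.support} := by
    intro e
    induction e with
    | h a b =>
      intro he'
      refine pair_mem_edgesWithin.2 ⟨?_, ?_, ?_⟩
      · exact c.edges_subset_edgeSet he'
      · exact SimpleGraph.Walk.fst_mem_support_of_mem_edges c he'
      · exact SimpleGraph.Walk.snd_mem_support_of_mem_edges c he'
  calc c.length = c.edges.length := (SimpleGraph.Walk.length_edges c).symm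
    _ = c.edges.toFinset.card := (List.toFinset_card_of_nodup hc.isTrail.edges_nodup).symm
    _ = (↑c.edges.toFinset : Set (Sym2 (Fin n))).ncard := (Set.ncard_coe_finset _).symm
    _ ≤ _ := Set.ncard_le_ncard (fun e he => hsub e (by simpa using he)) (Set.toFinite _)

/-- components are closed under taking cycles: whether comp contains a cycle -/
def cycComp (G : SimpleGraph (Fin n)) (v : Fin n) : Prop :=
  ∃ u ∈ compS G v, ∃ c : G.Walk u u, c.IsCycle

lemma cycComp_of_comp_eq {u v : Fin n} (h : compS G u = compS G v) :
    cycComp G u ↔ cycComp G v := by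
  unfold cycComp
  rw [h]

lemma cyc_comp_dense {v : Fin n} (hcyc : cycComp G v) :
    (compS G v).ncard ≤ eIn G (compS G v) := by
  obtain ⟨u, hu, c, hc⟩ := hcyc
  set U₀ := {x | x ∈ c.support} with hU₀
  have hU₀sub : U₀ ⊆ compS G v := by
    intro x hx
    have := walk_support_subset_comp c x hx
    rwa [compS_eq_of_mem hu] at this
  have hU₀ne : U₀.Nonempty := ⟨u, c.start_mem_support⟩
  have hU₀card : U₀.ncard = c.length := cycle_support_ncard hc
  have hU₀e : c.length ≤ eIn G U₀ := eIn_cycle_support hc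
  have hle : U₀.ncard ≤ (compS G v).ncard := Set.ncard_le_ncard hU₀sub (Set.toFinite _)
  obtain ⟨U', _, hU'C, hU'card, hU'e⟩ :=
    grow G ((compS G v).ncard - U₀.ncard) U₀ hU₀sub hU₀ne (by omega)
  have : U' = compS G v := Set.eq_of_subset_of_ncard_le hU'C (by omega) (Set.toFinite _)
  rw [this] at hU'e
  omega

end Comp

section Claims

variable {G : SimpleGraph (Fin n)} {k : ℕ}

lemma ncard_split {C X : Set (Fin n)} (h : C ⊆ X) : X.ncard = C.ncard + (X \ C).ncard := by
  conv_lhs => rw [← Set.union_diff_cancel h]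
  exact Set.ncard_union_eq Set.disjoint_sdiff_right (Set.toFinite _) (Set.toFinite _)

lemma eIn_split {C X : Set (Fin n)} (h : C ⊆ X) (hC : ClosedSet G C) :
    eIn G X = eIn G C + eIn G (X \ C) := by
  conv_lhs => rw [← Set.union_diff_cancel h]
  exact eIn_union_eq Set.disjoint_sdiff_right hC

lemma ffree_contra (hk : 3 ≤ k)
    (hF : ∀ S : Set (Fin n), S.ncard = k → eIn G S ≤ k - 1)
    {S : Set (Fin n)} (hcard : S.ncard = k) (hge : k ≤ eIn G S) : False := by
  have := hF S hcard
  omega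

lemma comp_small_of_short_cycle (hk : 3 ≤ k) (hn : k ≤ n)
    (hF : ∀ S : Set (Fin n), S.ncard = k → eIn G S ≤ k - 1)
    {u : Fin n} (c : G.Walk u u) (hc : c.IsCycle) (hlen : c.length ≤ k) :
    (compS G u).ncard ≤ k - 1 := by
  by_contra hbig
  push_neg at hbig
  set U₀ := {x | x ∈ c.support} with hU₀
  have hU₀sub : U₀ ⊆ compS G u := fun x hx => walk_support_subset_comp c x hx
  have hU₀card : U₀.ncard = c.length := cycle_support_ncard hc
  have hU₀e := eIn_cycle_support hc
  rw [← hU₀] at hU₀e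
  obtain ⟨U', _, _, hcard', he'⟩ := grow G (k - c.length) U₀ hU₀sub ⟨u, c.start_mem_support⟩
    (by omega)
  have h1 : U'.ncard = k := by omega
  have h2 : k ≤ eIn G U' := by omega
  exact ffree_contra hk hF h1 h2

lemma eIn_lt_of_acyclic {X : Set (Fin n)}
    (hacyc : ∀ (u : Fin n) (c : G.Walk u u), c.IsCycle → ¬(∀ x ∈ c.support, x ∈ X))
    (hne : X.Nonempty) : eIn G X + 1 ≤ X.ncard := by
  by_contra h
  push_neg at h
  obtain ⟨u, c, hc, hsupp⟩ := exists_cycle_of_dense G X.ncard X rfl hne (by omega)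
  exact hacyc u c hc hsupp

lemma eIn_le_of_acyclic {X : Set (Fin n)}
    (hacyc : ∀ (u : Fin n) (c : G.Walk u u), c.IsCycle → ¬(∀ x ∈ c.support, x ∈ X)) :
    eIn G X ≤ X.ncard := by
  rcases X.eq_empty_or_nonempty with rfl | hne
  · rw [eIn_empty]
    omega
  · have := eIn_lt_of_acyclic hacyc hne
    omega

lemma UBX : ∀ (f : ℕ) (X : Set (Fin n)), X.ncard ≤ f → ClosedSet G X →
    (∀ v ∈ X, eIn G (compS G v) ≤ (compS G v).ncard) → eIn G X ≤ X.ncard := by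
  intro f
  induction f with
  | zero =>
    intro X hf _ _
    have hXe : X = ∅ := by
      rcases X.eq_empty_or_nonempty with h | h
      · exact h
      · exfalso
        have := (Set.ncard_pos (Set.toFinite _)).2 h
        omega
    rw [hXe, eIn_empty]
    omega
  | succ f ihf =>
    intro X hf hcl hub
    rcases X.eq_empty_or_nonempty with rfl | ⟨v, hv⟩
    · rw [eIn_empty]
      omega
    · have hC : compS G v ⊆ X := compS_subset_of_closed hcl hv
      have hCpos : 1 ≤ (compS G v).ncard :=
        (Set.ncard_pos (Set.toFinite _)).2 ⟨v, mem_compS_self G v⟩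
      have hsum := eIn_split hC (compS_closed G v)
      have hncard := ncard_split hC
      have hX' : (X \ compS G v).ncard ≤ f := by omega
      have hrec := ihf (X \ compS G v) hX' (hcl.diff (compS_closed G v))
        (fun w hw => hub w hw.1)
      have hv' := hub v hv
      omega

lemma G2' : ∀ (f : ℕ) (X : Set (Fin n)), X.ncard ≤ f → ClosedSet G X →
    (∀ v ∈ X, (compS G v).ncard ≤ eIn G (compS G v)) →
    ∀ R, 1 ≤ R → R ≤ X.ncard →
    ∃ T, T ⊆ X ∧ T.ncard = R ∧ R ≤ eIn G T + 1 := by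
  intro f
  induction f with
  | zero => intro X hf _ _ R h1 hR; omega
  | succ f ihf =>
    intro X hf hcl hdense R h1 hR
    have hne : X.Nonempty := (Set.ncard_pos (Set.toFinite _)).1 (by omega)
    obtain ⟨v, hv⟩ := hne
    have hC : compS G v ⊆ X := compS_subset_of_closed hcl hv
    have hCpos : 1 ≤ (compS G v).ncard :=
      (Set.ncard_pos (Set.toFinite _)).2 ⟨v, mem_compS_self G v⟩
    by_cases hRC : R ≤ (compS G v).ncard
    · obtain ⟨T, hT1, hT2, hT3⟩ := tool_piece G v R h1 hRC
      exact ⟨T, subset_trans hT1 hC, hT2, hT3⟩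
    · push_neg at hRC
      have hncard := ncard_split hC
      obtain ⟨T', hT'1, hT'2, hT'3⟩ := ihf (X \ compS G v) (by omega)
        (hcl.diff (compS_closed G v)) (fun w hw => hdense w hw.1)
        (R - (compS G v).ncard) (by omega) (by omega)
      have hdisj : Disjoint (compS G v) T' :=
        Set.disjoint_of_subset_right hT'1 Set.disjoint_sdiff_right
      have hcard : (compS G v ∪ T').ncard = R := by
        rw [Set.ncard_union_eq hdisj (Set.toFinite _) (Set.toFinite _)]
        omega
      have hsup := eIn_superadd (G := G) hdisj
      have hdv := hdense v hv
      refine ⟨compS G v ∪ T', Set.union_subset hC (subset_trans hT'1 Set.diff_subset), hcard, ?_⟩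
      omega

lemma G3' : ∀ (f : ℕ) (X : Set (Fin n)), X.ncard ≤ f → ClosedSet G X →
    (∀ (u : Fin n) (c : G.Walk u u), c.IsCycle → ¬(∀ x ∈ c.support, x ∈ X)) →
    ∀ R, R ≤ X.ncard →
    ∃ T, T ⊆ X ∧ T.ncard = R ∧ R + eIn G X ≤ eIn G T + X.ncard := by
  intro f
  induction f with
  | zero =>
    intro X hf hcl hacyc R hR
    obtain rfl : R = 0 := by omega
    refine ⟨∅, Set.empty_subset _, Set.ncard_empty _, ?_⟩
    rw [eIn_empty]
    have := eIn_le_of_acyclic hacyc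
    omega
  | succ f ihf =>
    intro X hf hcl hacyc R hR
    rcases Nat.eq_zero_or_pos R with rfl | hRpos
    · refine ⟨∅, Set.empty_subset _, Set.ncard_empty _, ?_⟩
      rw [eIn_empty]
      have := eIn_le_of_acyclic hacyc
      omega
    · have hne : X.Nonempty := (Set.ncard_pos (Set.toFinite _)).1 (by omega)
      obtain ⟨v, hv⟩ := hne
      have hC : compS G v ⊆ X := compS_subset_of_closed hcl hv
      have hCpos : 1 ≤ (compS G v).ncard :=
        (Set.ncard_pos (Set.toFinite _)).2 ⟨v, mem_compS_self G v⟩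
      have hacycC : ∀ (u : Fin n) (c : G.Walk u u), c.IsCycle →
          ¬(∀ x ∈ c.support, x ∈ compS G v) :=
        fun u c hc hs => hacyc u c hc (fun x hx => hC (hs x hx))
      have hXbound : eIn G X + 1 ≤ X.ncard := eIn_lt_of_acyclic hacyc ⟨v, hv⟩
      by_cases hRC : R ≤ (compS G v).ncard
      · obtain ⟨T, hT1, hT2, hT3⟩ := tool_piece G v R hRpos hRC
        exact ⟨T, subset_trans hT1 hC, hT2, by omega⟩
      · push_neg at hRC
        have hncard := ncard_split hC
        have hsum := eIn_split hC (compS_closed G v)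
        obtain ⟨T', hT'1, hT'2, hT'3⟩ := ihf (X \ compS G v) (by omega)
          (hcl.diff (compS_closed G v))
          (fun u c hc hs => hacyc u c hc (fun x hx => (hs x hx).1))
          (R - (compS G v).ncard) (by omega)
        have hdisj : Disjoint (compS G v) T' :=
          Set.disjoint_of_subset_right hT'1 Set.disjoint_sdiff_right
        have hcard : (compS G v ∪ T').ncard = R := by
          rw [Set.ncard_union_eq hdisj (Set.toFinite _) (Set.toFinite _)]
          omega
        have hsup := eIn_superadd (G := G) hdisj
        have hCdense : eIn G (compS G v) + 1 ≤ (compS G v).ncard :=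
          eIn_lt_of_acyclic hacycC ⟨v, mem_compS_self G v⟩
        refine ⟨compS G v ∪ T',
          Set.union_subset hC (subset_trans hT'1 Set.diff_subset), hcard, ?_⟩
        omega

/-- Key claim: in an F-free graph the union of small components spans
at most as many edges as it has vertices. -/
lemma claimX (G : SimpleGraph (Fin n)) (k : ℕ) (hk : 3 ≤ k) (hn : k ≤ n)
    (hF : ∀ S : Set (Fin n), S.ncard = k → eIn G S ≤ k - 1) :
    eIn G {v | (compS G v).ncard ≤ k} ≤ {v | (compS G v).ncard ≤ k}.ncard := by
  set W := {v | (compS G v).ncard ≤ k} with hW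
  by_contra hcon
  push_neg at hcon
  set Wc := {v | (compS G v).ncard ≤ k ∧ cycComp G v} with hWc
  set Wt := {v | (compS G v).ncard ≤ k ∧ ¬ cycComp G v} with hWt
  have hWcl : ClosedSet G W := by
    intro x y hxy hx
    have hcomp : compS G y = compS G x := compS_eq_of_adj hxy
    simp only [hW, Set.mem_setOf_eq, hcomp] at hx ⊢
    exact hx
  have hWccl : ClosedSet G Wc := by
    intro x y hxy hx
    have hcomp : compS G y = compS G x := compS_eq_of_adj hxy
    simp only [hWc, Set.mem_setOf_eq, hcomp] at hx ⊢
    exact ⟨hx.1, (cycComp_of_comp_eq hcomp).2 hx.2⟩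
  have hWtcl : ClosedSet G Wt := by
    intro x y hxy hx
    have hcomp : compS G y = compS G x := compS_eq_of_adj hxy
    simp only [hWt, Set.mem_setOf_eq, hcomp] at hx ⊢
    exact ⟨hx.1, fun hcy => hx.2 ((cycComp_of_comp_eq hcomp).1 hcy)⟩
  have hWunion : W = Wc ∪ Wt := by
    ext x
    simp only [hW, hWc, hWt, Set.mem_setOf_eq, Set.mem_union]
    tauto
  have hdisj : Disjoint Wc Wt := by
    rw [Set.disjoint_left]
    rintro x ⟨_, hc⟩ ⟨_, hnc⟩
    exact hnc hc
  have hEeq : eIn G W = eIn G Wc + eIn G Wt := by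
    rw [hWunion]
    exact eIn_union_eq hdisj hWccl
  have hNeq : W.ncard = Wc.ncard + Wt.ncard := by
    rw [hWunion]
    exact Set.ncard_union_eq hdisj (Set.toFinite _) (Set.toFinite _)
  have hWtacyc : ∀ (u : Fin n) (c : G.Walk u u), c.IsCycle →
      ¬(∀ x ∈ c.support, x ∈ Wt) := by
    intro u c hc hs
    have hu : u ∈ Wt := hs u c.start_mem_support
    exact hu.2 ⟨u, mem_compS_self G u, c, hc⟩
  have hWtb : eIn G Wt ≤ Wt.ncard := eIn_le_of_acyclic hWtacyc
  have hWce : Wc.ncard + 1 ≤ eIn G Wc := by omega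
  have hex : ∃ v ∈ Wc, (compS G v).ncard + 1 ≤ eIn G (compS G v) := by
    by_contra hno
    push_neg at hno
    have := UBX Wc.ncard Wc le_rfl hWccl (fun v hv => by have := hno v hv; omega)
    omega
  obtain ⟨v, hvWc, hvsurp⟩ := hex
  have hCsub : compS G v ⊆ Wc := compS_subset_of_closed hWccl hvWc
  have hCk : (compS G v).ncard ≤ k - 1 := by
    obtain ⟨u, hu, c, hc⟩ := hvWc.2
    have hsupp : {x | x ∈ c.support} ⊆ compS G v := by
      intro x hx
      have := walk_support_subset_comp c x hx
      rwa [compS_eq_of_mem hu] at this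
    have hlen : c.length ≤ k := by
      have h1 : {x | x ∈ c.support}.ncard = c.length := cycle_support_ncard hc
      have h2 : {x | x ∈ c.support}.ncard ≤ (compS G v).ncard :=
        Set.ncard_le_ncard hsupp (Set.toFinite _)
      have h3 : (compS G v).ncard ≤ k := hvWc.1
      omega
    have := comp_small_of_short_cycle hk hn hF c hc hlen
    rwa [compS_eq_of_mem hu] at this
  by_cases hWck : k ≤ Wc.ncard
  · -- fill from other cyclic components
    have hncardWc := ncard_split hCsub
    obtain ⟨T, hT1, hT2, hT3⟩ := G2' (Wc \ compS G v).ncard (Wc \ compS G v) le_rfl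
      (hWccl.diff (compS_closed G v)) (fun w hw => cyc_comp_dense hw.1.2)
      (k - (compS G v).ncard) (by omega) (by omega)
    have hdisjT : Disjoint (compS G v) T :=
      Set.disjoint_of_subset_right hT1 Set.disjoint_sdiff_right
    have hScard : (compS G v ∪ T).ncard = k := by
      rw [Set.ncard_union_eq hdisjT (Set.toFinite _) (Set.toFinite _)]
      omega
    have hsup := eIn_superadd (G := G) hdisjT
    exact ffree_contra hk hF hScard (by omega)
  · push_neg at hWck
    by_cases hNk : k ≤ W.ncard
    · -- fill from trees
      obtain ⟨T, hT1, hT2, hT3⟩ := G3' Wt.ncard Wt le_rfl hWtcl hWtacyc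
        (k - Wc.ncard) (by omega)
      have hdisjT : Disjoint Wc T := Set.disjoint_of_subset_right hT1 hdisj
      have hScard : (Wc ∪ T).ncard = k := by
        rw [Set.ncard_union_eq hdisjT (Set.toFinite _) (Set.toFinite _)]
        omega
      have hsup := eIn_superadd (G := G) hdisjT
      exact ffree_contra hk hF hScard (by omega)
    · push_neg at hNk
      -- fill from a big component
      have hbigne : Wᶜ.Nonempty := by
        by_contra hcon2
        rw [Set.not_nonempty_iff_eq_empty, Set.compl_empty_iff] at hcon2
        have : W.ncard = n := by rw [hcon2, Set.ncard_univ]; simp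
        omega
      obtain ⟨b, hb⟩ := hbigne
      have hbk : k + 1 ≤ (compS G b).ncard := by
        have : ¬ (compS G b).ncard ≤ k := hb
        omega
      obtain ⟨T, hT1, hT2, hT3⟩ := tool_piece G b (k - W.ncard) (by omega) (by omega)
      have hTbig : T ⊆ Wᶜ := subset_trans hT1 (compS_subset_of_closed hWcl.compl hb)
      have hdisjT : Disjoint W T := by
        rw [Set.disjoint_left]
        intro x hx hxT
        exact (hTbig hxT) hx
      have hScard : (W ∪ T).ncard = k := by
        rw [Set.ncard_union_eq hdisjT (Set.toFinite _) (Set.toFinite _)]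
        omega
      have hsup := eIn_superadd (G := G) hdisjT
      exact ffree_contra hk hF hScard (by omega)

end Claims

section Gadget

variable {G : SimpleGraph (Fin n)}

/-- every vertex on a cycle has two distinct neighbours along the cycle -/
lemma twonbrs {H : SimpleGraph (Fin n)} {u : Fin n} {c : H.Walk u u} (hc : c.IsCycle)
    {x : Fin n} (hx : x ∈ c.support) :
    ∃ a d, a ≠ d ∧ s(x, a) ∈ c.edges ∧ s(x, d) ∈ c.edges ∧
      a ∈ c.support ∧ d ∈ c.support := by
  have hc'cyc := hc.rotate hx
  have hrot := c.rotate_edges x hx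
  have hsrot := SimpleGraph.Walk.support_rotate c x hx
  generalize hgen : c.rotate x hx = c' at hc'cyc hrot hsrot
  cases c' with
  | nil =>
    exfalso
    have := hc'cyc.three_le_length
    simp at this
  | cons h q =>
    rename_i w₁
    -- first edge s(x, w₁)
    have he₁ : s(x, w₁) ∈ (SimpleGraph.Walk.cons h q).edges := by
      rw [SimpleGraph.Walk.edges_cons]
      exact List.mem_cons_self
    have hnodup : s(x, w₁) ∉ q.edges := by
      have := hc'cyc.isTrail.edges_nodup
      rw [SimpleGraph.Walk.edges_cons, List.nodup_cons] at this
      exact this.1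
    -- last edge via reverse of q
    have hqrev : q.reverse.length = q.length := by simp
    cases hq : q.reverse with
    | nil =>
      exfalso
      have hlen := hc'cyc.three_le_length
      have : q.length = 0 := by
        rw [← hqrev, hq]
        rfl
      rw [SimpleGraph.Walk.length_cons] at hlen
      omega
    | cons h₂ q₂ =>
      rename_i w₂
      have he₂' : s(x, w₂) ∈ q.reverse.edges := by
        rw [hq, SimpleGraph.Walk.edges_cons]
        exact List.mem_cons_self
      have he₂q : s(x, w₂) ∈ q.edges := by
        rw [SimpleGraph.Walk.edges_reverse] at he₂'
        exact List.mem_reverse.1 he₂'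
      have he₂ : s(x, w₂) ∈ (SimpleGraph.Walk.cons h q).edges := by
        rw [SimpleGraph.Walk.edges_cons]
        exact List.mem_cons_of_mem _ he₂q
      have hne : w₁ ≠ w₂ := by
        intro heq
        rw [← heq] at he₂q
        exact hnodup he₂q
      have hw₁supp : w₁ ∈ (SimpleGraph.Walk.cons h q).support.tail := by
        rw [SimpleGraph.Walk.support_cons, List.tail_cons]
        exact q.start_mem_support
      have hw₂supp : w₂ ∈ (SimpleGraph.Walk.cons h q).support.tail := by
        rw [SimpleGraph.Walk.support_cons, List.tail_cons]
        have : w₂ ∈ q.reverse.support := by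
          rw [hq, SimpleGraph.Walk.support_cons]
          exact List.mem_cons_of_mem _ q₂.start_mem_support
        rw [SimpleGraph.Walk.support_reverse] at this
        exact List.mem_reverse.1 this
      have hmem : ∀ z, z ∈ (SimpleGraph.Walk.cons h q).support.tail → z ∈ c.support := by
        intro z hz
        have := hsrot.mem_iff.1 hz
        exact List.mem_of_mem_tail this
      exact ⟨w₁, w₂, hne, hrot.mem_iff.1 he₁, hrot.mem_iff.1 he₂,
        hmem w₁ hw₁supp, hmem w₂ hw₂supp⟩

/-- restriction of a graph to a vertex set -/
def restrictG (G : SimpleGraph (Fin n)) (A : Set (Fin n)) : SimpleGraph (Fin n) where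
  Adj x y := G.Adj x y ∧ x ∈ A ∧ y ∈ A
  symm := by
    constructor
    rintro x y ⟨h, hx, hy⟩
    exact ⟨h.symm, hy, hx⟩
  loopless := by
    constructor
    rintro x ⟨h, _, _⟩
    exact G.loopless.irrefl x h

lemma restrictG_le (G : SimpleGraph (Fin n)) (A : Set (Fin n)) : restrictG G A ≤ G :=
  fun _ _ h => h.1

lemma restrictG_edgeSet (G : SimpleGraph (Fin n)) (A : Set (Fin n)) :
    (restrictG G A).edgeSet = edgesWithin G A := by
  ext e
  induction e with
  | h x y =>
    rw [SimpleGraph.mem_edgeSet, pair_mem_edgesWithin]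
    exact Iff.rfl

/-- the edges of a path along `ψ 0, ψ 1, …, ψ (M-1)` -/
def pathEdges (ψ : ℕ → Fin n) (M : ℕ) : Set (Sym2 (Fin n)) :=
  {e | ∃ i, i + 1 < M ∧ e = s(ψ i, ψ (i + 1))}

lemma pathEdges_ncard (ψ : ℕ → Fin n) (M : ℕ)
    (hinj : ∀ i < M, ∀ j < M, ψ i = ψ j → i = j) :
    (pathEdges ψ M).ncard = M - 1 := by
  have himg : pathEdges ψ M = (fun i => s(ψ i, ψ (i + 1))) '' {i | i + 1 < M} := by
    ext e
    constructor
    · rintro ⟨i, hi, rfl⟩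
      exact ⟨i, hi, rfl⟩
    · rintro ⟨i, hi, rfl⟩
      exact ⟨i, hi, rfl⟩
  have hinjOn : Set.InjOn (fun i => s(ψ i, ψ (i + 1))) {i | i + 1 < M} := by
    intro i hi j hj heq
    simp only [Set.mem_setOf_eq] at hi hj
    simp only [Sym2.eq_iff] at heq
    rcases heq with ⟨h1, _⟩ | ⟨h1, h2⟩
    · exact hinj i (by omega) j (by omega) h1
    · have hij : i = j + 1 := hinj i (by omega) (j + 1) (by omega) h1
      have hji : i + 1 = j := hinj (i + 1) (by omega) j (by omega) h2
      omega
  have hset : {i | i + 1 < M} = ↑(Finset.range (M - 1)) := by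
    ext i
    simp only [Set.mem_setOf_eq, Finset.coe_range, Set.mem_Iio]
    omega
  rw [himg, Set.ncard_image_of_injOn hinjOn, hset, Set.ncard_coe_finset, Finset.card_range]

lemma pathEdges_not_diag (ψ : ℕ → Fin n) (M : ℕ)
    (hinj : ∀ i < M, ∀ j < M, ψ i = ψ j → i = j) :
    ∀ e ∈ pathEdges ψ M, ¬ e.IsDiag := by
  rintro e ⟨i, hi, rfl⟩
  rw [Sym2.isDiag_iff_proj_eq]
  intro heq
  have := hinj i (by omega) (i + 1) (by omega) heq
  omega

/-- edge count of the path gadget -/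
lemma gadget_ncard (A : Set (Fin n)) (ψ : ℕ → Fin n) (M : ℕ)
    (hinj : ∀ i < M, ∀ j < M, ψ i = ψ j → i = j)
    (hψA : ∀ i, i + 1 < M → ψ i ∉ A) :
    (restrictG G A ⊔ SimpleGraph.fromEdgeSet (pathEdges ψ M)).edgeSet.ncard
      = eIn G A + (M - 1) := by
  rw [SimpleGraph.edgeSet_sup, SimpleGraph.edgeSet_fromEdgeSet, restrictG_edgeSet]
  have hdiag : pathEdges ψ M \ {e | e.IsDiag} = pathEdges ψ M := by
    ext e
    simp only [Set.mem_diff, Set.mem_setOf_eq, and_iff_left_iff_imp]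
    intro he
    exact pathEdges_not_diag ψ M hinj e he
  rw [Sym2.diagSet, hdiag]
  have hdisj : Disjoint (edgesWithin G A) (pathEdges ψ M) := by
    rw [Set.disjoint_left]
    rintro e he ⟨i, hi, rfl⟩
    exact hψA i hi ((pair_mem_edgesWithin.1 he).2.1)
  rw [Set.ncard_union_eq hdisj (Set.toFinite _) (Set.toFinite _),
    pathEdges_ncard ψ M hinj, eIn]

/-- the path gadget has no short cycles -/
lemma gadget_no_short_cycle {k : ℕ} (A : Set (Fin n)) (ψ : ℕ → Fin n) (M : ℕ)
    (hinj : ∀ i < M, ∀ j < M, ψ i = ψ j → i = j)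
    (hψA : ∀ i, i + 1 < M → ψ i ∉ A)
    (hG : ∀ (u : Fin n) (c : G.Walk u u), c.IsCycle → (∀ x ∈ c.support, x ∈ A) →
      ¬ c.length ≤ k)
    {u : Fin n} (c : (restrictG G A ⊔ SimpleGraph.fromEdgeSet (pathEdges ψ M)).Walk u u)
    (hc : c.IsCycle) : ¬ c.length ≤ k := by
  by_cases hall : ∀ e ∈ c.edges, e ∈ (restrictG G A).edgeSet
  · -- entirely inside the restricted graph
    set c' := c.transfer (restrictG G A) hall with hc'def
    have hc'cyc : c'.IsCycle := hc.transfer hall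
    have hc'len : c'.length = c.length := c.length_transfer hall
    have hc'supp : c'.support = c.support := c.support_transfer hall
    set c'' := SimpleGraph.Walk.mapLe (restrictG_le G A) c' with hc''def
    have hc''cyc : c''.IsCycle := (SimpleGraph.Walk.mapLe_isCycle _).2 hc'cyc
    have hc''len : c''.length = c'.length := SimpleGraph.Walk.length_map _ _
    have hc''supp : c''.support = c'.support := by
      rw [hc''def, SimpleGraph.Walk.mapLe, SimpleGraph.Walk.support_map]
      show List.map (fun x => x) c'.support = c'.support
      simp
    have hsuppA : ∀ x ∈ c''.support, x ∈ A := by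
      intro x hxs
      rw [hc''supp] at hxs
      obtain ⟨a, d, _, hxa, _, _, _⟩ := twonbrs hc'cyc hxs
      have : s(x, a) ∈ (restrictG G A).edgeSet := c'.edges_subset_edgeSet hxa
      rw [SimpleGraph.mem_edgeSet] at this
      exact this.2.1
    have := hG u c'' hc''cyc hsuppA
    omega
  · push_neg at hall
    obtain ⟨e₀, he₀c, he₀r⟩ := hall
    have he₀H := c.edges_subset_edgeSet he₀c
    rw [SimpleGraph.edgeSet_sup] at he₀H
    have he₀p : e₀ ∈ pathEdges ψ M := by
      rcases he₀H with h | h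
      · exact absurd h he₀r
      · rw [SimpleGraph.edgeSet_fromEdgeSet] at h
        exact h.1
    obtain ⟨i₁, hi₁, he₀eq⟩ := he₀p
    set I := {i | i + 1 < M ∧ s(ψ i, ψ (i + 1)) ∈ c.edges} with hI
    have hIne : I.Nonempty := ⟨i₁, hi₁, he₀eq ▸ he₀c⟩
    set i₀ := sInf I with hi₀def
    have hi₀ : i₀ ∈ I := Nat.sInf_mem hIne
    have hmin : ∀ j < i₀, j ∉ I := fun j hj => Nat.notMem_of_lt_sInf hj
    have hi₀M : i₀ + 1 < M := hi₀.1
    have hv : ψ i₀ ∈ c.support :=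
      SimpleGraph.Walk.fst_mem_support_of_mem_edges c hi₀.2
    obtain ⟨a, d, hne, ha, hd, _, _⟩ := twonbrs hc hv
    have hclaim : ∀ w, s(ψ i₀, w) ∈ c.edges → w = ψ (i₀ + 1) := by
      intro w hw
      have hwH := c.edges_subset_edgeSet hw
      rw [SimpleGraph.edgeSet_sup] at hwH
      rcases hwH with h | h
      · exfalso
        rw [SimpleGraph.mem_edgeSet] at h
        exact hψA i₀ hi₀.1 h.2.1
      · rw [SimpleGraph.edgeSet_fromEdgeSet] at h
        obtain ⟨j, hj, heq⟩ := h.1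
        rw [Sym2.eq_iff] at heq
        rcases heq with ⟨h1, h2⟩ | ⟨h1, h2⟩
        · have : i₀ = j := hinj i₀ (by omega) j (by omega) h1
          rw [h2, ← this]
        · exfalso
          have hij : i₀ = j + 1 := hinj i₀ (by omega) (j + 1) (by omega) h1
          have hjI : j ∈ I := by
            refine ⟨hj, ?_⟩
            have : s(ψ j, ψ (j + 1)) = s(ψ i₀, w) := by
              rw [← h1, ← h2, Sym2.eq_swap]
            rw [this]
            exact hw
          exact hmin j (by omega) hjI
    have had : a = d := by
      rw [hclaim a ha, hclaim d hd]
    exact absurd had hne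

end Gadget

section CycGadget

/-- edge set of the full cycle on `Fin n` -/
def cycEdges (n : ℕ) [NeZero n] : Set (Sym2 (Fin n)) := {e | ∃ i : Fin n, e = s(i, i + 1)}

lemma fin_one_ne_zero (h3 : 3 ≤ n) [NeZero n] : (1 : Fin n) ≠ 0 := by
  intro h
  have hv := congrArg Fin.val h
  rw [Fin.val_one', Fin.val_zero] at hv
  have h1n : 1 % n = 1 := Nat.mod_eq_of_lt (by omega)
  omega

lemma fin_add_one_ne (h3 : 3 ≤ n) [NeZero n] (i : Fin n) : i + 1 ≠ i := by
  intro h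
  exact fin_one_ne_zero h3 (add_eq_left.1 h)

lemma fin_two_step_ne (h3 : 3 ≤ n) [NeZero n] {i j : Fin n}
    (h1 : i = j + 1) (h2 : j = i + 1) : False := by
  rw [h2, add_assoc] at h1
  have h0 : (1 : Fin n) + 1 = 0 := (left_eq_add.1 h1).symm ▸ rfl
  have h0' : ((1 : Fin n) + 1 = 0) := by
    have := left_eq_add.1 h1
    exact this
  have hv := congrArg Fin.val h0'
  rw [Fin.val_add, Fin.val_one', Fin.val_zero] at hv
  have h1n : 1 % n = 1 := Nat.mod_eq_of_lt (by omega)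
  rw [h1n] at hv
  have h2n : 2 % n = 2 := Nat.mod_eq_of_lt (by omega)
  have : (1 + 1) % n = 2 % n := by norm_num
  rw [this, h2n] at hv
  omega

lemma cycEdges_not_diag (h3 : 3 ≤ n) [NeZero n] :
    ∀ e ∈ cycEdges n, ¬ e.IsDiag := by
  rintro e ⟨i, rfl⟩
  rw [Sym2.isDiag_iff_proj_eq]
  intro heq
  exact fin_add_one_ne h3 i heq.symm

lemma cycEdges_ncard (h3 : 3 ≤ n) [NeZero n] : (cycEdges n).ncard = n := by
  have himg : cycEdges n = (fun i : Fin n => s(i, i + 1)) '' Set.univ := by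
    ext e
    constructor
    · rintro ⟨i, rfl⟩
      exact ⟨i, trivial, rfl⟩
    · rintro ⟨i, _, rfl⟩
      exact ⟨i, rfl⟩
  have hinjOn : Set.InjOn (fun i : Fin n => s(i, i + 1)) Set.univ := by
    intro i _ j _ heq
    simp only [Sym2.eq_iff] at heq
    rcases heq with ⟨h1, _⟩ | ⟨h1, h2⟩
    · exact h1
    · exact absurd (fin_two_step_ne h3 h1 h2.symm) (by simp)
  rw [himg, Set.ncard_image_of_injOn hinjOn, Set.ncard_univ]
  simp

lemma cycGadget_ncard (h3 : 3 ≤ n) [NeZero n] :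
    (SimpleGraph.fromEdgeSet (cycEdges n)).edgeSet.ncard = n := by
  rw [SimpleGraph.edgeSet_fromEdgeSet]
  have hdiag : cycEdges n \ {e | e.IsDiag} = cycEdges n := by
    ext e
    simp only [Set.mem_diff, Set.mem_setOf_eq, and_iff_left_iff_imp]
    intro he
    exact cycEdges_not_diag h3 e he
  rw [Sym2.diagSet, hdiag, cycEdges_ncard h3]

open Fin.NatCast in
lemma cycGadget_no_short_cycle (h3 : 3 ≤ n) [NeZero n] {k : ℕ} (hnk : k + 1 ≤ n)
    {u : Fin n} (c : (SimpleGraph.fromEdgeSet (cycEdges n)).Walk u u)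
    (hc : c.IsCycle) : ¬ c.length ≤ k := by
  have hadj : ∀ x w, s(x, w) ∈ c.edges → (w = x + 1 ∨ x = w + 1) := by
    intro x w hw
    have h := c.edges_subset_edgeSet hw
    rw [SimpleGraph.edgeSet_fromEdgeSet] at h
    obtain ⟨⟨i, heq⟩, _⟩ := h
    rw [Sym2.eq_iff] at heq
    rcases heq with ⟨rfl, rfl⟩ | ⟨rfl, rfl⟩
    · exact Or.inl rfl
    · exact Or.inr rfl
  have hclosed : ∀ x, x ∈ c.support → x + 1 ∈ c.support := by
    intro x hx
    obtain ⟨a, d, hne, ha, hd, haS, hdS⟩ := twonbrs hc hx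
    rcases hadj x a ha with h | h
    · rw [← h]; exact haS
    · rcases hadj x d hd with h' | h'
      · rw [← h']; exact hdS
      · exfalso
        apply hne
        have : a + 1 = d + 1 := by rw [← h, ← h']
        exact add_right_cancel this
  have hall : ∀ m : ℕ, u + (m : Fin n) ∈ c.support := by
    intro m
    induction m with
    | zero => simpa using c.start_mem_support
    | succ m ihm =>
      have hcast : ((m + 1 : ℕ) : Fin n) = (m : Fin n) + 1 := by push_cast; ring
      rw [hcast, ← add_assoc]
      exact hclosed _ ihm
  have huniv : ∀ y : Fin n, y ∈ c.support := by
    intro y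
    have := hall (y - u).val
    rwa [Fin.cast_val_eq_self, show u + (y - u) = y by abel] at this
  have hlen : c.length = n := by
    have h1 := cycle_support_ncard hc
    have h2 : {x | x ∈ c.support} = Set.univ := Set.eq_univ_of_forall huniv
    rw [h2, Set.ncard_univ] at h1
    simp at h1
    omega
  omega

end CycGadget

section Main

lemma edgesIn_coe (G : SimpleGraph (Fin n)) (F : Finset (Fin n)) :
    G.edgesIn F = eIn G (↑F : Set (Fin n)) := rfl

lemma hF_set (G : SimpleGraph (Fin n)) {k : ℕ}
    (hF : ∀ S : Finset (Fin n), S.card = k → G.edgesIn S ≤ k - 1) :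
    ∀ S : Set (Fin n), S.ncard = k → eIn G S ≤ k - 1 := by
  intro S hS
  have hfin := Set.toFinite S
  have hcard : hfin.toFinset.card = k := by
    rw [← Set.ncard_eq_toFinset_card]
    exact hS
  have h := hF hfin.toFinset hcard
  rw [edgesIn_coe, Set.Finite.coe_toFinset] at h
  exact h

lemma ffree_of_no_short_cycle (G : SimpleGraph (Fin n)) {k : ℕ} (hk : 3 ≤ k)
    (hC : ∀ (v : Fin n) (w : G.Walk v v), w.IsCycle → ¬(3 ≤ w.length ∧ w.length ≤ k)) :
    ∀ S : Finset (Fin n), S.card = k → G.edgesIn S ≤ k - 1 := by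
  intro S hS
  rw [edgesIn_coe]
  by_contra h
  push_neg at h
  have hkle : k ≤ eIn G ↑S := by omega
  have hncard : (↑S : Set (Fin n)).ncard = k := by
    rw [Set.ncard_coe_finset]
    exact hS
  have hne : (↑S : Set (Fin n)).Nonempty := by
    apply (Set.ncard_pos (Set.toFinite _)).1
    omega
  obtain ⟨u, c, hc, hsupp⟩ := exists_cycle_of_dense G (↑S : Set (Fin n)).ncard ↑S rfl hne
    (by omega)
  have hlen : c.length ≤ k := by
    have h1 := cycle_support_ncard hc
    have h3 := Set.ncard_le_ncard (fun x hx => hsupp x hx : {x | x ∈ c.support} ⊆ ↑S)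
      (Set.toFinite _)
    omega
  exact hC u c hc ⟨hc.three_le_length, hlen⟩

lemma smallW_closed (G : SimpleGraph (Fin n)) (k : ℕ) :
    ClosedSet G {v : Fin n | (compS G v).ncard ≤ k} := by
  intro x y hxy hx
  have hcomp : compS G y = compS G x := compS_eq_of_adj hxy
  simp only [Set.mem_setOf_eq, hcomp] at hx ⊢
  exact hx

/-- Main construction: from an F-free graph, a graph with no short cycles and
at least as many edges. -/
lemma exists_no_short_cycle_ge (G : SimpleGraph (Fin n)) (k : ℕ) (hk : 3 ≤ k) (hn : k ≤ n)
    (hF : ∀ S : Finset (Fin n), S.card = k → G.edgesIn S ≤ k - 1) :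
    ∃ H : SimpleGraph (Fin n),
      (∀ (v : Fin n) (w : H.Walk v v), w.IsCycle → ¬(3 ≤ w.length ∧ w.length ≤ k)) ∧
      G.edgeSet.ncard ≤ H.edgeSet.ncard := by
  haveI : NeZero n := ⟨by omega⟩
  have h3n : 3 ≤ n := by omega
  have hFs : ∀ S : Set (Fin n), S.ncard = k → eIn G S ≤ k - 1 := hF_set G hF
  set W := {v : Fin n | (compS G v).ncard ≤ k} with hW
  set A := Wᶜ with hA
  have hX : eIn G W ≤ W.ncard := claimX G k hk hn hFs
  have hWcl : ClosedSet G W := smallW_closed G k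
  have htot : G.edgeSet.ncard = eIn G A + eIn G W := by
    rw [← eIn_univ]
    have hsplit : (Set.univ : Set (Fin n)) = A ∪ W := by
      rw [hA]
      exact (Set.compl_union_self W).symm
    rw [hsplit]
    exact eIn_union_eq disjoint_compl_left hWcl.compl
  have hGA : ∀ (u : Fin n) (c : G.Walk u u), c.IsCycle → (∀ x ∈ c.support, x ∈ A) →
      ¬ c.length ≤ k := by
    intro u c hc hsupp hlen
    have hsmall := comp_small_of_short_cycle hk hn hFs c hc hlen
    have hu : u ∈ A := hsupp u c.start_mem_support
    rw [hA] at hu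
    apply hu
    show (compS G u).ncard ≤ k
    omega
  by_cases hbig : A.Nonempty
  · -- path through W, plus bridge to a big component
    obtain ⟨b, hb⟩ := hbig
    set N := W.ncard with hN
    have hWfin := Set.toFinite W
    have hWcard : hWfin.toFinset.card = N := by
      rw [← Set.ncard_eq_toFinset_card]
    set M := N + 1 with hM
    set ψ : ℕ → Fin n := fun i =>
      if h : i < N then (hWfin.toFinset.orderIsoOfFin hWcard ⟨i, h⟩ : Fin n) else b with hψ
    have hψW : ∀ i, i < N → ψ i ∈ W := by
      intro i hi
      rw [hψ]
      simp only [dif_pos hi]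
      have := (hWfin.toFinset.orderIsoOfFin hWcard ⟨i, hi⟩).2
      rwa [Set.Finite.mem_toFinset] at this
    have hbW : b ∉ W := hb
    have hinj : ∀ i < M, ∀ j < M, ψ i = ψ j → i = j := by
      intro i hi j hj heq
      by_cases hiN : i < N <;> by_cases hjN : j < N
      · rw [hψ] at heq
        simp only [dif_pos hiN, dif_pos hjN] at heq
        have h2 := Subtype.coe_injective heq
        have h3 := (hWfin.toFinset.orderIsoOfFin hWcard).injective h2
        exact Fin.mk.inj_iff.1 h3
      · exfalso
        have h1 := hψW i hiN
        have h2 : ψ j = b := by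
          rw [hψ]
          simp only [dif_neg hjN]
        rw [heq, h2] at h1
        exact hbW h1
      · exfalso
        have h1 := hψW j hjN
        have h2 : ψ i = b := by
          rw [hψ]
          simp only [dif_neg hiN]
        rw [← heq, h2] at h1
        exact hbW h1
      · omega
    have hψA : ∀ i, i + 1 < M → ψ i ∉ A := by
      intro i hi
      have := hψW i (by omega)
      rw [hA]
      simpa using this
    refine ⟨restrictG G A ⊔ SimpleGraph.fromEdgeSet (pathEdges ψ M), ?_, ?_⟩
    · intro v w hw hcon
      exact gadget_no_short_cycle A ψ M hinj hψA hGA w hw hcon.2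
    · rw [gadget_ncard A ψ M hinj hψA]
      omega
  · -- no big components
    rw [Set.not_nonempty_iff_eq_empty] at hbig
    have hWuniv : W = Set.univ := by
      rw [hA] at hbig
      rwa [Set.compl_empty_iff] at hbig
    have hNn : W.ncard = n := by
      rw [hWuniv, Set.ncard_univ]
      simp
    have htot' : G.edgeSet.ncard = eIn G W := by
      rw [htot, hbig, eIn_empty]
      omega
    by_cases hEn : eIn G W ≤ n - 1
    · -- plain path on all of Fin n
      set ψ : ℕ → Fin n := fun i => if h : i < n then (⟨i, h⟩ : Fin n) else 0 with hψ
      have hinj : ∀ i < n, ∀ j < n, ψ i = ψ j → i = j := by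
        intro i hi j hj heq
        rw [hψ] at heq
        simp only [dif_pos hi, dif_pos hj] at heq
        exact Fin.mk.inj_iff.1 heq
      have hψA : ∀ i, i + 1 < n → ψ i ∉ (∅ : Set (Fin n)) := by
        intro i _ h
        exact h
      have hGE : ∀ (u : Fin n) (c : G.Walk u u), c.IsCycle →
          (∀ x ∈ c.support, x ∈ (∅ : Set (Fin n))) → ¬ c.length ≤ k := by
        intro u c _ hsupp _
        exact hsupp u c.start_mem_support
      refine ⟨restrictG G ∅ ⊔ SimpleGraph.fromEdgeSet (pathEdges ψ n), ?_, ?_⟩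
      · intro v w hw hcon
        exact gadget_no_short_cycle ∅ ψ n hinj hψA hGE w hw hcon.2
      · rw [gadget_ncard ∅ ψ n hinj hψA, eIn_empty]
        omega
    · -- edges = vertices: use a Hamiltonian cycle
      push_neg at hEn
      have hEn' : eIn G W = n := by omega
      have hnk : k + 1 ≤ n := by
        by_contra hcon
        push_neg at hcon
        have hkn : n = k := by omega
        have huniv : (Set.univ : Set (Fin n)).ncard = k := by
          rw [Set.ncard_univ]
          simp [hkn]
        have := hFs Set.univ huniv
        rw [← hWuniv] at this
        omega
      refine ⟨SimpleGraph.fromEdgeSet (cycEdges n), ?_, ?_⟩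
      · intro v w hw hcon
        exact cycGadget_no_short_cycle h3n hnk w hw hcon.2
      · rw [cycGadget_ncard h3n]
        omega

end Main

end ExFAux


theorem ex_F_eq_ex_cycles (n k : ℕ) (hk : 3 ≤ k) (hn : k ≤ n) :
    sSup {m | ∃ G : SimpleGraph (Fin n),
        (∀ S : Finset (Fin n), S.card = k → G.edgesIn S ≤ k - 1) ∧ G.edgeSet.ncard = m}
      = sSup {m | ∃ G : SimpleGraph (Fin n),
        (∀ (v : Fin n) (w : G.Walk v v), w.IsCycle → ¬(3 ≤ w.length ∧ w.length ≤ k)) ∧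
        G.edgeSet.ncard = m} := by
  classical
  set SL := {m | ∃ G : SimpleGraph (Fin n),
      (∀ S : Finset (Fin n), S.card = k → G.edgesIn S ≤ k - 1) ∧ G.edgeSet.ncard = m} with hSL
  set SR := {m | ∃ G : SimpleGraph (Fin n),
      (∀ (v : Fin n) (w : G.Walk v v), w.IsCycle → ¬(3 ≤ w.length ∧ w.length ≤ k)) ∧
      G.edgeSet.ncard = m} with hSR
  have hbot_edges : (⊥ : SimpleGraph (Fin n)).edgeSet.ncard = 0 := by
    simp
  have hbotF : ∀ S : Finset (Fin n), S.card = k →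
      (⊥ : SimpleGraph (Fin n)).edgesIn S ≤ k - 1 := by
    intro S _
    unfold SimpleGraph.edgesIn
    have hempty : {e ∈ (⊥ : SimpleGraph (Fin n)).edgeSet | ∀ x ∈ e, x ∈ S} = ∅ := by
      simp
    rw [hempty]
    simp
  have hbotC : ∀ (v : Fin n) (w : (⊥ : SimpleGraph (Fin n)).Walk v v), w.IsCycle →
      ¬(3 ≤ w.length ∧ w.length ≤ k) := by
    intro v w hw _
    cases w with
    | nil =>
      have := hw.three_le_length
      simp at this
    | cons h q => simp at h
  have hLne : SL.Nonempty := ⟨0, ⊥, hbotF, hbot_edges⟩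
  have hRne : SR.Nonempty := ⟨0, ⊥, hbotC, hbot_edges⟩
  have hLbdd : BddAbove SL := by
    refine ⟨Fintype.card (Sym2 (Fin n)), ?_⟩
    rintro m ⟨G, _, rfl⟩
    calc G.edgeSet.ncard ≤ (Set.univ : Set (Sym2 (Fin n))).ncard :=
        Set.ncard_le_ncard (Set.subset_univ _) (Set.toFinite _)
      _ = _ := by rw [Set.ncard_univ]; simp
  have hRbdd : BddAbove SR := by
    refine ⟨Fintype.card (Sym2 (Fin n)), ?_⟩
    rintro m ⟨G, _, rfl⟩
    calc G.edgeSet.ncard ≤ (Set.univ : Set (Sym2 (Fin n))).ncard :=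
        Set.ncard_le_ncard (Set.subset_univ _) (Set.toFinite _)
      _ = _ := by rw [Set.ncard_univ]; simp
  apply le_antisymm
  · obtain ⟨G, hGF, hGm⟩ := Nat.sSup_mem hLne hLbdd
    obtain ⟨H, hHnc, hHge⟩ := ExFAux.exists_no_short_cycle_ge G k hk hn hGF
    have hmem : H.edgeSet.ncard ∈ SR := ⟨H, hHnc, rfl⟩
    calc sSup SL = G.edgeSet.ncard := hGm.symm
      _ ≤ H.edgeSet.ncard := hHge
      _ ≤ sSup SR := le_csSup hRbdd hmem
  · apply csSup_le_csSup hLbdd hRne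
    rintro m ⟨G, hGC, rfl⟩
    exact ⟨G, ExFAux.ffree_of_no_short_cycle G hk hGC, rfl⟩
end

section
/- Let G be a forest on n vertices and let k ≤ n. If t is the minimum number of connected components of G needed so that their total vertex count is at least k, then the maximum number of edges in any induced subgraph of G on k vertices is exactly k − t. -/
open Finset

section Aux
open SimpleGraph

variable {V : Type*} {G : SimpleGraph V}

private lemma concat_isPath {a b c : V} {p : G.Walk a b} (h : G.Adj b c)
    (hp : p.IsPath) (hc : c ∉ p.support) : (p.concat h).IsPath := by
  rw [Walk.isPath_def, Walk.support_concat, List.nodup_append']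
  exact ⟨hp.support_nodup, List.nodup_singleton c,
    fun x hx hx' => hc (by rw [List.mem_singleton] at hx'; exact hx' ▸ hx)⟩

private lemma exists_last {u v r : V}
    (huv : G.Adj u v) (hr : G.Reachable r u) :
    ∃ (x y : V) (h : G.Adj y x), s(u, v) = s(y, x) ∧
      ∃ q : G.Walk r y, (q.concat h).IsPath := by
  classical
  obtain ⟨w⟩ := hr
  let p := w.bypass
  have hp : p.IsPath := w.bypass_isPath
  by_cases hv : v ∈ p.support
  · refine ⟨u, v, huv.symm, Sym2.eq_swap, p.takeUntil v hv, ?_⟩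
    refine concat_isPath _ (hp.takeUntil hv) ?_
    intro hu
    have hspec := p.take_spec hv
    have hnd := hp.support_nodup
    rw [← hspec, Walk.support_append] at hnd
    have hutail : u ∈ (p.dropUntil v hv).support.tail := by
      have hu' : u ∈ (p.dropUntil v hv).support := Walk.end_mem_support _
      rw [Walk.support_eq_cons, List.mem_cons] at hu'
      rcases hu' with h1 | h1
      · exact absurd h1 huv.ne
      · exact h1
    exact (List.disjoint_of_nodup_append hnd) hu hutail
  · exact ⟨v, u, huv, rfl, p, concat_isPath _ hp hv⟩

private lemma edgesIn_empty [Finite V] (G : SimpleGraph V) : G.edgesIn (∅ : Finset V) = 0 := by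
  rw [SimpleGraph.edgesIn, Set.ncard_eq_zero (Set.toFinite _)]
  ext e
  induction e with
  | _ a b =>
    simp only [Set.mem_setOf_eq, Set.mem_empty_iff_false, iff_false, not_and]
    intro _ h
    simpa using h a (by simp)

private lemma UB {n : ℕ} {G : SimpleGraph (Fin n)} [DecidableEq G.ConnectedComponent]
    (hG : G.IsAcyclic) (S : Finset (Fin n)) :
    G.edgesIn S + (S.image G.connectedComponentMk).card ≤ S.card := by
  classical
  rcases S.eq_empty_or_nonempty with rfl | ⟨v0, hv0⟩
  · simp [edgesIn_empty]
  haveI : Nonempty (Fin n) := ⟨v0⟩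
  set C := S.image G.connectedComponentMk with hC
  have hex : ∀ c ∈ C, ∃ v, v ∈ S ∧ G.connectedComponentMk v = c := by
    intro c hc; simpa using Finset.mem_image.mp hc
  set root : G.ConnectedComponent → Fin n := fun c =>
    if h : ∃ v, v ∈ S ∧ G.connectedComponentMk v = c then h.choose else Classical.arbitrary _
    with hroot
  have hrootS : ∀ c ∈ C, root c ∈ S := by
    intro c hc
    rw [hroot]; dsimp only
    rw [dif_pos (hex c hc)]
    exact (hex c hc).choose_spec.1
  have hrootmk : ∀ c ∈ C, G.connectedComponentMk (root c) = c := by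
    intro c hc
    rw [hroot]; dsimp only
    rw [dif_pos (hex c hc)]
    exact (hex c hc).choose_spec.2
  set R := C.image root with hR
  have hRS : R ⊆ S := by
    intro x hx
    obtain ⟨c, hc, rfl⟩ := Finset.mem_image.mp hx
    exact hrootS c hc
  have hRcard : R.card = C.card := by
    apply Finset.card_image_of_injOn
    intro c hc c' hc' h
    rw [← hrootmk c hc, h, hrootmk c' hc']
  set E := {e ∈ G.edgeSet | ∀ x ∈ e, x ∈ S} with hE
  set P : Sym2 (Fin n) → Fin n → Prop := fun e x => ∃ (y : Fin n) (h : G.Adj y x),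
    e = s(y, x) ∧ ∃ q : G.Walk (root (G.connectedComponentMk x)) y, (q.concat h).IsPath
    with hP
  have hPex : ∀ e ∈ E, ∃ x, P e x := by
    intro e he
    induction e with
    | _ u v =>
      obtain ⟨he1, he2⟩ := he
      rw [SimpleGraph.mem_edgeSet] at he1
      have hu : u ∈ S := he2 u (by simp)
      have hcu : G.connectedComponentMk u ∈ C := Finset.mem_image_of_mem _ hu
      have hreach : G.Reachable (root (G.connectedComponentMk u)) u :=
        (SimpleGraph.ConnectedComponent.eq).mp (hrootmk _ hcu)
      obtain ⟨x, y, h, hsym, q, hq⟩ := exists_last he1 hreach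
      have hxmk : G.connectedComponentMk x = G.connectedComponentMk u := by
        have hx : x = u ∨ x = v := by
          have hx' : x ∈ s(u, v) := by rw [hsym]; simp
          simpa using hx'
        rcases hx with rfl | rfl
        · rfl
        · exact (SimpleGraph.ConnectedComponent.eq).mpr he1.symm.reachable
      refine ⟨x, y, h, hsym, ?_⟩
      rw [hxmk]
      exact ⟨q, hq⟩
  set f : Sym2 (Fin n) → Fin n := fun e => if h : ∃ x, P e x then h.choose else v0 with hf
  have hfP : ∀ e ∈ E, P e (f e) := by
    intro e he
    rw [hf]; dsimp only
    rw [dif_pos (hPex e he)]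
    exact (hPex e he).choose_spec
  have hmaps : ∀ e ∈ E, f e ∈ (↑S \ ↑R : Set (Fin n)) := by
    intro e he
    have hPe := hfP e he
    obtain ⟨x, hx⟩ : ∃ x, x = f e := ⟨_, rfl⟩
    rw [← hx] at hPe ⊢
    obtain ⟨y, h, hey, q, hq⟩ := hPe
    constructor
    · refine he.2 x ?_
      rw [hey]; simp
    · intro hfR
      obtain ⟨c, hc, hcr⟩ := Finset.mem_image.mp hfR
      have hre : root (G.connectedComponentMk x) = x := by
        rw [← hcr, hrootmk c hc, hcr]
      have hnd := hq.support_nodup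
      rw [Walk.support_concat, List.nodup_append'] at hnd
      exact hnd.2.2 q.start_mem_support (by rw [hre]; simp)
  have hinj : Set.InjOn f E := by
    intro e1 he1 e2 he2 hfe
    have hP1 : P e1 (f e1) := hfP e1 he1
    have hP2 : P e2 (f e1) := hfe ▸ hfP e2 he2
    obtain ⟨x, hx⟩ : ∃ x, x = f e1 := ⟨_, rfl⟩
    rw [← hx] at hP1 hP2
    obtain ⟨y1, h1, hey1, q1, hq1⟩ := hP1
    obtain ⟨y2, h2, hey2, q2, hq2⟩ := hP2
    have hpath := hG.path_unique ⟨q1.concat h1, hq1⟩ ⟨q2.concat h2, hq2⟩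
    have hwalk : q1.concat h1 = q2.concat h2 := congrArg Subtype.val hpath
    have hedges := congrArg Walk.edges hwalk
    rw [Walk.edges_concat, Walk.edges_concat] at hedges
    have hlast := congrArg List.getLast? hedges
    simp only [List.concat_eq_append, List.getLast?_append, List.getLast?_singleton] at hlast
    rw [hey1, hey2]
    simpa using hlast
  have hcount : E.ncard ≤ (↑S \ ↑R : Set (Fin n)).ncard :=
    Set.ncard_le_ncard_of_injOn f hmaps hinj (Set.toFinite _)
  have h1 : (↑S \ ↑R : Set (Fin n)).ncard = S.card - R.card := by
    rw [← Finset.coe_sdiff, Set.ncard_coe_finset, Finset.card_sdiff_of_subset hRS]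
  have h2 : R.card ≤ S.card := Finset.card_le_card hRS
  have h3 : G.edgesIn S = E.ncard := by rw [SimpleGraph.edgesIn, hE]
  omega

private lemma exists_boundary {A : Set V} :
    ∀ {a w : V}, G.Walk a w → a ∈ A → w ∉ A → ∃ x y, G.Adj x y ∧ x ∈ A ∧ y ∉ A := by
  intro a w p
  induction p with
  | nil => intro h h'; exact absurd h h'
  | @cons a b w hadj p ih =>
    intro ha hw
    by_cases hb : b ∈ A
    · exact ih hb hw
    · exact ⟨a, b, hadj, ha, hb⟩

private lemma edgesIn_insert_ge {n : ℕ} {G : SimpleGraph (Fin n)} {A : Finset (Fin n)}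
    {x y : Fin n} (hxy : G.Adj x y) (hx : x ∈ A) (hy : y ∉ A) :
    G.edgesIn A + 1 ≤ G.edgesIn (insert y A) := by
  classical
  have hsub : insert s(x, y) {e ∈ G.edgeSet | ∀ z ∈ e, z ∈ A} ⊆
      {e ∈ G.edgeSet | ∀ z ∈ e, z ∈ insert y A} := by
    intro e he
    rcases Set.mem_insert_iff.mp he with rfl | he
    · refine ⟨G.mem_edgeSet.mpr hxy, ?_⟩
      intro z hz
      rcases Sym2.mem_iff.mp hz with rfl | rfl
      · exact Finset.mem_insert_of_mem hx
      · exact Finset.mem_insert_self _ _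
    · exact ⟨he.1, fun z hz => Finset.mem_insert_of_mem (he.2 z hz)⟩
  have hnot : s(x, y) ∉ {e ∈ G.edgeSet | ∀ z ∈ e, z ∈ A} := fun hc => hy (hc.2 y (by simp))
  calc G.edgesIn A + 1 = (insert s(x, y) {e ∈ G.edgeSet | ∀ z ∈ e, z ∈ A}).ncard := by
        rw [Set.ncard_insert_of_notMem hnot (Set.toFinite _)]; rfl
    _ ≤ _ := Set.ncard_le_ncard hsub (Set.toFinite _)

private lemma exists_connected_subset {n : ℕ} {G : SimpleGraph (Fin n)}
    (c : G.ConnectedComponent) :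
    ∀ r : ℕ, 1 ≤ r → r ≤ c.supp.ncard →
      ∃ A : Finset (Fin n), ↑A ⊆ c.supp ∧ A.card = r ∧ r - 1 ≤ G.edgesIn A := by
  classical
  intro r
  induction r with
  | zero => omega
  | succ r ih =>
    intro _ hle
    rcases Nat.eq_zero_or_pos r with rfl | hr
    · obtain ⟨v, hv⟩ := c.exists_rep
      refine ⟨{v}, ?_, by simp, by simp⟩
      intro z hz
      rw [Finset.coe_singleton, Set.mem_singleton_iff] at hz
      subst hz
      exact (ConnectedComponent.mem_supp_iff _ _).mpr hv
    · obtain ⟨A, hAs, hAc, hAe⟩ := ih hr (le_trans (Nat.le_succ r) hle)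
      have hex : ∃ w, w ∈ c.supp ∧ w ∉ A := by
        by_contra hco
        push_neg at hco
        have hsub : c.supp ⊆ ↑A := fun w hw => hco w hw
        have := Set.ncard_le_ncard hsub (Finset.finite_toSet A)
        rw [Set.ncard_coe_finset] at this
        omega
      obtain ⟨w, hws, hwA⟩ := hex
      obtain ⟨a, ha⟩ := Finset.card_pos.mp (show 0 < A.card by omega)
      have hreach : G.Reachable a w := by
        have h1 : G.connectedComponentMk a = c := (ConnectedComponent.mem_supp_iff _ _).mp (hAs ha)
        have h2 : G.connectedComponentMk w = c := (ConnectedComponent.mem_supp_iff _ _).mp hws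
        exact (ConnectedComponent.eq).mp (h1.trans h2.symm)
      obtain ⟨p⟩ := hreach
      obtain ⟨x, y, hxy, hxA, hyA⟩ := exists_boundary (A := (↑A : Set (Fin n))) p ha hwA
      have hxA' : x ∈ A := hxA
      have hyA' : y ∉ A := fun h => hyA h
      have hysupp : y ∈ c.supp := by
        rw [ConnectedComponent.mem_supp_iff]
        rw [← (ConnectedComponent.mem_supp_iff _ _).mp (hAs hxA')]
        exact (ConnectedComponent.eq).mpr hxy.symm.reachable
      refine ⟨insert y A, ?_, ?_, ?_⟩
      · rw [Finset.coe_insert]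
        exact Set.insert_subset hysupp hAs
      · rw [Finset.card_insert_of_notMem hyA', hAc]
      · have := edgesIn_insert_ge hxy hxA' hyA'
        omega

private lemma sum_le_edgesIn {n : ℕ} {G : SimpleGraph (Fin n)}
    [DecidableEq G.ConnectedComponent]
    (C : Finset G.ConnectedComponent) (A : G.ConnectedComponent → Finset (Fin n))
    (hA : ∀ c ∈ C, ↑(A c) ⊆ c.supp) :
    ∑ c ∈ C, G.edgesIn (A c) ≤ G.edgesIn (C.biUnion A) := by
  classical
  induction C using Finset.induction_on with
  | empty => simp
  | @insert c C' hcC' ih =>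
    rw [Finset.sum_insert hcC', Finset.biUnion_insert]
    have hA' : ∀ c' ∈ C', ↑(A c') ⊆ c'.supp := fun c' hc' => hA c' (Finset.mem_insert_of_mem hc')
    have hAc : ↑(A c) ⊆ c.supp := hA c (Finset.mem_insert_self _ _)
    set E1 := {e ∈ G.edgeSet | ∀ z ∈ e, z ∈ A c} with hE1
    set E2 := {e ∈ G.edgeSet | ∀ z ∈ e, z ∈ C'.biUnion A} with hE2
    have hdisj : Disjoint E1 E2 := by
      rw [Set.disjoint_left]
      intro e he1 he2
      induction e with
      | _ u v =>
        have hu1 : u ∈ A c := he1.2 u (by simp)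
        have hu2 : u ∈ C'.biUnion A := he2.2 u (by simp)
        obtain ⟨c', hc', hu2'⟩ := Finset.mem_biUnion.mp hu2
        have h1 : G.connectedComponentMk u = c := (ConnectedComponent.mem_supp_iff _ _).mp (hAc hu1)
        have h2 : G.connectedComponentMk u = c' :=
          (ConnectedComponent.mem_supp_iff _ _).mp (hA' c' hc' hu2')
        exact hcC' (h1 ▸ h2 ▸ hc')
    have hunion : E1 ∪ E2 ⊆ {e ∈ G.edgeSet | ∀ z ∈ e, z ∈ A c ∪ C'.biUnion A} := by
      rintro e (he | he)
      · exact ⟨he.1, fun z hz => Finset.mem_union_left _ (he.2 z hz)⟩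
      · exact ⟨he.1, fun z hz => Finset.mem_union_right _ (he.2 z hz)⟩
    have hcard : E1.ncard + E2.ncard = (E1 ∪ E2).ncard :=
      (Set.ncard_union_eq hdisj (Set.toFinite _) (Set.toFinite _)).symm
    have hle : (E1 ∪ E2).ncard ≤ G.edgesIn (A c ∪ C'.biUnion A) :=
      Set.ncard_le_ncard hunion (Set.toFinite _)
    have hih := ih hA'
    have heq1 : G.edgesIn (A c) = E1.ncard := rfl
    have heq2 : G.edgesIn (C'.biUnion A) = E2.ncard := rfl
    omega

private lemma exists_alloc {α : Type*} [DecidableEq α] :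
    ∀ (C : Finset α) (s : α → ℕ) (k : ℕ), C.card ≤ k → k ≤ ∑ c ∈ C, s c →
      (∀ c ∈ C, 1 ≤ s c) →
      ∃ r : α → ℕ, (∀ c ∈ C, 1 ≤ r c ∧ r c ≤ s c) ∧ ∑ c ∈ C, r c = k := by
  intro C
  induction C using Finset.induction_on with
  | empty =>
    intro s k _ h2 _
    simp only [Finset.sum_empty, Nat.le_zero] at h2
    exact ⟨fun _ => 0, by simp, by simp [h2]⟩
  | @insert c C' hc ih =>
    intro s k h1 h2 hs
    have hcard : C'.card ≤ ∑ x ∈ C', s x := by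
      rw [Finset.card_eq_sum_ones]
      exact Finset.sum_le_sum fun x hx => hs x (Finset.mem_insert_of_mem hx)
    rw [Finset.card_insert_of_notMem hc] at h1
    rw [Finset.sum_insert hc] at h2
    have hsc : 1 ≤ s c := hs c (Finset.mem_insert_self _ _)
    obtain ⟨v, hv1, hv2, hvc⟩ : ∃ v, v ≤ s c ∧ v ≤ k - C'.card ∧ (v = s c ∨ v = k - C'.card) :=
      ⟨min (s c) (k - C'.card), min_le_left _ _, min_le_right _ _, min_choice _ _⟩
    obtain ⟨r, hr, hrsum⟩ := ih s (k - v) (by omega) (by omega)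
      (fun c' hc' => hs c' (Finset.mem_insert_of_mem hc'))
    refine ⟨Function.update r c v, ?_, ?_⟩
    · intro a ha
      rcases Finset.mem_insert.mp ha with rfl | ha'
      · rw [Function.update_self]
        rcases hvc with rfl | rfl <;> omega
      · have hne : a ≠ c := fun h => hc (h ▸ ha')
        rw [Function.update_of_ne hne]
        exact hr a ha'
    · rw [Finset.sum_insert hc, Function.update_self,
        Finset.sum_update_of_notMem hc, hrsum]
      omega

end Aux

theorem forest_max_k_subgraph_edges (n k : ℕ) (hkn : k ≤ n) (G : SimpleGraph (Fin n))
    (hforest : G.IsAcyclic) (t : ℕ)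
    (ht : IsLeast {s | ∃ C : Finset G.ConnectedComponent,
      C.card = s ∧ k ≤ ∑ c ∈ C, c.supp.ncard} t) :
    IsGreatest {e | ∃ S : Finset (Fin n), S.card = k ∧ G.edgesIn S = e} (k - t) := by
  classical
  have hsupp1 : ∀ c : G.ConnectedComponent, 1 ≤ c.supp.ncard := by
    intro c
    obtain ⟨v, hv⟩ := c.exists_rep
    have hmem : v ∈ c.supp := (SimpleGraph.ConnectedComponent.mem_supp_iff _ _).mpr hv
    have := (Set.ncard_pos (Set.toFinite _)).mpr ⟨v, hmem⟩
    omega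
  obtain ⟨C0, hC0t, hC0k⟩ := ht.1
  have htk : t ≤ k := by
    rcases le_or_gt t k with h | h
    · exact h
    · obtain ⟨C', _hC'sub, hC'card⟩ := Finset.exists_subset_card_eq (s := C0) (n := k) (by omega)
      refine ht.2 ⟨C', hC'card, ?_⟩
      calc k = ∑ _c ∈ C', 1 := by rw [Finset.sum_const, hC'card]; simp
        _ ≤ ∑ c ∈ C', c.supp.ncard := Finset.sum_le_sum fun c _ => hsupp1 c
  have hkey : ∀ S : Finset (Fin n), S.card = k →
      t ≤ (S.image G.connectedComponentMk).card := by
    intro S hSk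
    refine ht.2 ⟨S.image G.connectedComponentMk, rfl, ?_⟩
    have hfib := Finset.card_eq_sum_card_fiberwise
      (f := G.connectedComponentMk) (s := S) (t := S.image G.connectedComponentMk)
      (fun x hx => Finset.mem_image_of_mem _ hx)
    rw [hSk] at hfib
    rw [hfib]
    refine Finset.sum_le_sum ?_
    intro c _hc
    have hsub : ↑(S.filter (fun v => G.connectedComponentMk v = c)) ⊆ c.supp := by
      intro v hv
      rw [Finset.coe_filter] at hv
      exact (SimpleGraph.ConnectedComponent.mem_supp_iff _ _).mpr hv.2
    have hle := Set.ncard_le_ncard hsub (Set.toFinite _)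
    rwa [Set.ncard_coe_finset] at hle
  have hub : ∀ e ∈ {e | ∃ S : Finset (Fin n), S.card = k ∧ G.edgesIn S = e}, e ≤ k - t := by
    rintro e ⟨S, hSk, rfl⟩
    have h1 := UB hforest S
    have h2 := hkey S hSk
    omega
  refine ⟨?_, hub⟩
  obtain ⟨r, hr, hrsum⟩ := exists_alloc C0 (fun c => c.supp.ncard) k (by omega) hC0k
    (fun c _ => hsupp1 c)
  have hAex : ∀ c ∈ C0, ∃ A : Finset (Fin n),
      ↑A ⊆ c.supp ∧ A.card = r c ∧ r c - 1 ≤ G.edgesIn A :=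
    fun c hc => exists_connected_subset c (r c) (hr c hc).1 (hr c hc).2
  choose! A hA1 hA2 hA3 using hAex
  set S := C0.biUnion A with hS
  have hdisj : ∀ x ∈ C0, ∀ y ∈ C0, x ≠ y → Disjoint (A x) (A y) := by
    intro x hx y hy hne
    rw [Finset.disjoint_left]
    intro a hax hay
    have h1 := (SimpleGraph.ConnectedComponent.mem_supp_iff _ _).mp (hA1 x hx hax)
    have h2 := (SimpleGraph.ConnectedComponent.mem_supp_iff _ _).mp (hA1 y hy hay)
    exact hne (h1 ▸ h2 ▸ rfl)
  have hScard : S.card = k := by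
    rw [hS, Finset.card_biUnion hdisj, ← hrsum]
    exact Finset.sum_congr rfl fun c hc => hA2 c hc
  have hlow : k - t ≤ G.edgesIn S := by
    have h1 : ∑ c ∈ C0, G.edgesIn (A c) ≤ G.edgesIn S := sum_le_edgesIn C0 A hA1
    have h2 : ∑ c ∈ C0, (r c - 1) ≤ ∑ c ∈ C0, G.edgesIn (A c) :=
      Finset.sum_le_sum fun c hc => hA3 c hc
    have h3 : ∑ c ∈ C0, r c ≤ ∑ c ∈ C0, (r c - 1 + 1) :=
      Finset.sum_le_sum fun c _hc => by omega
    have h4 : ∑ c ∈ C0, (r c - 1 + 1) = (∑ c ∈ C0, (r c - 1)) + C0.card := by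
      rw [Finset.sum_add_distrib, Finset.sum_const, smul_eq_mul, mul_one]
    omega
  have hup : G.edgesIn S ≤ k - t := hub _ ⟨S, hScard, rfl⟩
  exact ⟨S, hScard, le_antisymm hup hlow⟩
end

section
/- Define a sequence by t_{n₁} = n₂ and t_{m−1} = t_m − ⌈2t_m/m⌉ for 2 ≤ m ≤ n₁. For any loopless multigraph G on n₁ vertices with n₂ edges, and for each m with 1 ≤ m ≤ n₁, there exists an m-vertex induced subgraph of G with at least t_m edges; in particular, if t_{k₁} > k₂ then G has a k₁-vertex induced subgraph with more than k₂ edges. -/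
open Finset

section Aux
open Finset

lemma ceil_mono_step (m : ℕ) (hm : 2 ≤ m) : ∀ a b : ℕ, a ≤ b →
    a - (2*a) ⌈/⌉ m ≤ b - (2*b) ⌈/⌉ m := by
  have hm0 : 0 < m := by omega
  have hle : ∀ a : ℕ, (2*a) ⌈/⌉ m ≤ a := by
    intro a
    rw [ceilDiv_le_iff_le_mul hm0]
    nlinarith
  intro a b hab
  induction b, hab using Nat.le_induction with
  | base => rfl
  | succ b hab ih =>
    refine ih.trans ?_
    have h1 : (2*(b+1)) ⌈/⌉ m ≤ (2*b) ⌈/⌉ m + 1 := by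
      rw [ceilDiv_le_iff_le_mul hm0]
      have := le_smul_ceilDiv (b := 2*b) hm0
      rw [smul_eq_mul] at this
      nlinarith
    have := hle b
    omega

lemma edgesIn_erase {n : ℕ} (G : Multigraph n) (S : Finset (Fin n)) (v : Fin n) (hv : v ∈ S) :
    G.edgesIn S = (∑ u ∈ S, G.W v u) + G.edgesIn (S.erase v) := by
  have hS : S = insert v (S.erase v) := (Finset.insert_erase hv).symm
  have hvS' : v ∉ S.erase v := Finset.notMem_erase v S
  rw [hS, Finset.erase_insert hvS']
  simp only [Multigraph.edgesIn, Finset.sum_filter]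
  rw [Finset.sum_insert hvS', Finset.sum_insert hvS']
  have h1 : ∀ u ∈ S.erase v,
      (∑ w ∈ insert v (S.erase v), if u < w then G.W u w else 0)
      = (if u < v then G.W u v else 0) + ∑ w ∈ S.erase v, if u < w then G.W u w else 0 := by
    intro u _
    rw [Finset.sum_insert hvS']
  rw [Finset.sum_congr rfl h1, Finset.sum_add_distrib, Finset.sum_insert hvS']
  simp only [lt_irrefl, if_false, G.loopless, zero_add]
  have h2 : (∑ w ∈ S.erase v, if v < w then G.W v w else 0)
      + (∑ u ∈ S.erase v, if u < v then G.W u v else 0) = ∑ u ∈ S.erase v, G.W v u := by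
    rw [← Finset.sum_add_distrib]
    refine Finset.sum_congr rfl fun u hu => ?_
    have hne : u ≠ v := Finset.ne_of_mem_erase hu
    rcases lt_trichotomy u v with h | h | h
    · simp [h, not_lt_of_gt h, G.symm u v]
    · exact absurd h hne
    · simp [h, not_lt_of_gt h]
  omega

lemma double_count {n : ℕ} (G : Multigraph n) (S : Finset (Fin n)) :
    ∑ v ∈ S, ∑ u ∈ S, G.W v u = 2 * G.edgesIn S := by
  induction S using Finset.induction with
  | empty => simp [Multigraph.edgesIn]
  | @insert x S hx ih =>
    have he : (insert x S).erase x = S := Finset.erase_insert hx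
    rw [edgesIn_erase G _ x (Finset.mem_insert_self x S), he]
    rw [Finset.sum_insert hx]
    have h1 : ∀ v ∈ S, ∑ u ∈ insert x S, G.W v u = G.W v x + ∑ u ∈ S, G.W v u := by
      intro v _; rw [Finset.sum_insert hx]
    rw [Finset.sum_congr rfl h1, Finset.sum_add_distrib, ih, Finset.sum_insert hx,
      G.loopless, zero_add]
    have h2 : ∑ v ∈ S, G.W v x = ∑ v ∈ S, G.W x v :=
      Finset.sum_congr rfl fun v _ => G.symm v x
    omega

/-- Step lemma: delete a minimum-degree vertex. -/
lemma delete_step {n : ℕ} (G : Multigraph n) (S : Finset (Fin n)) (m : ℕ)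
    (hcard : S.card = m) (hm : 2 ≤ m) :
    ∃ S' : Finset (Fin n), S'.card = m - 1 ∧
      G.edgesIn S - (2 * G.edgesIn S) ⌈/⌉ m ≤ G.edgesIn S' := by
  have hne : S.Nonempty := Finset.card_pos.1 (by omega)
  obtain ⟨v, hv, hmin⟩ := Finset.exists_min_image S (fun v => ∑ u ∈ S, G.W v u) hne
  have hdc := double_count G S
  have hsum : S.card * (∑ u ∈ S, G.W v u) ≤ ∑ w ∈ S, ∑ u ∈ S, G.W w u := by
    calc S.card * (∑ u ∈ S, G.W v u) = ∑ _w ∈ S, ∑ u ∈ S, G.W v u := by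
          rw [Finset.sum_const, smul_eq_mul]
      _ ≤ ∑ w ∈ S, ∑ u ∈ S, G.W w u := Finset.sum_le_sum hmin
  have hdeg : ∑ u ∈ S, G.W v u ≤ (2 * G.edgesIn S) ⌈/⌉ m := by
    have hm0 : 0 < m := by omega
    have h2 : 2 * G.edgesIn S ≤ m * ((2 * G.edgesIn S) ⌈/⌉ m) := by
      have := le_smul_ceilDiv (b := 2 * G.edgesIn S) hm0
      rwa [smul_eq_mul] at this
    by_contra hc
    push_neg at hc
    have : m * ((2 * G.edgesIn S) ⌈/⌉ m) < m * (∑ u ∈ S, G.W v u) :=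
      (Nat.mul_lt_mul_left hm0).2 hc
    rw [hcard] at hsum
    omega
  refine ⟨S.erase v, by rw [Finset.card_erase_of_mem hv, hcard], ?_⟩
  have := edgesIn_erase G S v hv
  omega

end Aux

theorem recursive_lower_bound (n₁ n₂ k₁ k₂ : ℕ) (t : ℕ → ℕ)
    (ht0 : t n₁ = n₂)
    (hrec : ∀ m, 2 ≤ m → m ≤ n₁ → t (m - 1) = t m - (2 * t m) ⌈/⌉ m)
    (G : Multigraph n₁) (hG : G.edgeCount = n₂) :
    (∀ m, 1 ≤ m → m ≤ n₁ →
        ∃ S : Finset (Fin n₁), S.card = m ∧ t m ≤ G.edgesIn S) ∧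
      (1 ≤ k₁ → k₁ ≤ n₁ → k₂ < t k₁ →
        ∃ S : Finset (Fin n₁), S.card = k₁ ∧ k₂ < G.edgesIn S) := by
  
  have main : ∀ j : ℕ, j + 1 ≤ n₁ →
      ∃ S : Finset (Fin n₁), S.card = n₁ - j ∧ t (n₁ - j) ≤ G.edgesIn S := by
    intro j
    induction j with
    | zero =>
      intro _
      refine ⟨Finset.univ, by simp, ?_⟩
      rw [Nat.sub_zero, ht0]
      have : G.edgesIn Finset.univ = n₂ := hG
      omega
    | succ j ih =>
      intro hj
      obtain ⟨S, hScard, hSle⟩ := ih (by omega)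
      have hm2 : 2 ≤ n₁ - j := by omega
      obtain ⟨S', hS'card, hS'le⟩ := delete_step G S (n₁ - j) hScard hm2
      refine ⟨S', by rw [hS'card]; omega, ?_⟩
      rw [show n₁ - (j+1) = (n₁ - j) - 1 by omega, hrec (n₁ - j) hm2 (by omega)]
      calc t (n₁ - j) - (2 * t (n₁ - j)) ⌈/⌉ (n₁ - j)
          ≤ G.edgesIn S - (2 * G.edgesIn S) ⌈/⌉ (n₁ - j) :=
            ceil_mono_step (n₁ - j) hm2 _ _ hSle
        _ ≤ G.edgesIn S' := hS'le
  have first : ∀ m, 1 ≤ m → m ≤ n₁ →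
      ∃ S : Finset (Fin n₁), S.card = m ∧ t m ≤ G.edgesIn S := by
    intro m h1 h2
    obtain ⟨S, hc, hl⟩ := main (n₁ - m) (by omega)
    rw [show n₁ - (n₁ - m) = m by omega] at hc hl
    exact ⟨S, hc, hl⟩
  refine ⟨first, fun h1 h2 h3 => ?_⟩
  obtain ⟨S, hc, hl⟩ := first k₁ h1 h2
  exact ⟨S, hc, by omega⟩
end
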